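/- arXiv:1710.02679 — 8 statements merged into one kernel-verified Lean document; each statement's English description precedes it below -/
import Mathlib

section
/- A binary relation R on a finite set S satisfies, for all i, j, i', j' in S: (1) not i R i, and (2) (i R j and i' R j') implies (i R j' or i' R j), if and only if there exist mappings ℓ, h : S → ℝ such that for all i, j in S: ℓ(i) ≤ h(i), and i R j ⟺ h(i) < ℓ(j). -/
/-- **Proposition (Interval order).** A binary relation `R` on a finite set `S` is
irreflexive and satisfies `(i R j ∧ i' R j') → (i R j' ∨ i' R j)` if and only if there
exist mappings `ℓ, h : S → ℝ` with `ℓ i ≤ h i` for all `i` and `i R j ↔ h i < ℓ j`. -/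
theorem interval_order_iff_representation {S : Type*} [Fintype S] (R : S → S → Prop) :
    ((∀ i, ¬ R i i) ∧
      (∀ i j i' j', R i j → R i' j' → R i j' ∨ R i' j)) ↔
    ∃ ℓ h : S → ℝ, (∀ i, ℓ i ≤ h i) ∧ ∀ i j, (R i j ↔ h i < ℓ j) := by
  classical
  constructor
  · rintro ⟨hirr, hint⟩
    -- P i : set of predecessors of i
    set P : S → Finset S := fun i => Finset.univ.filter (fun x => R x i) with hP
    set L : S → ℕ := fun i => (P i).card with hL
    have hne : ∀ i : S, (Finset.univ.filter (fun k => ¬ R i k)).Nonempty := by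
      intro i
      exact ⟨i, by simp [hirr i]⟩
    set H : S → ℕ := fun i => (Finset.univ.filter (fun k => ¬ R i k)).sup' (hne i) L with hH
    refine ⟨fun i => (L i : ℝ), fun i => (H i : ℝ), ?_, ?_⟩
    · intro i
      have : L i ≤ H i := Finset.le_sup' L (by simp [hirr i])
      show (L i : ℝ) ≤ (H i : ℝ)
      exact_mod_cast this
    · intro i j
      constructor
      · intro hij
        have : H i < L j := by
          rw [hH]
          rw [Finset.sup'_lt_iff]
          intro k hk
          simp only [Finset.mem_filter, Finset.mem_univ, true_and] at hk
          -- show P k ⊊ P j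
          apply Finset.card_lt_card
          constructor
          · intro x hx
            simp only [hP, Finset.mem_filter, Finset.mem_univ, true_and] at hx ⊢
            rcases hint i j x k hij hx with h1 | h2
            · exact absurd h1 hk
            · exact h2
          · intro hsub
            have : i ∈ P k := hsub (by simp [hP, hij])
            simp only [hP, Finset.mem_filter, Finset.mem_univ, true_and] at this
            exact hk this
        show (H i : ℝ) < (L j : ℝ)
        exact_mod_cast this
      · intro hlt
        by_contra hnR
        have : L j ≤ H i := Finset.le_sup' L (by simp [hnR])
        have : (L j : ℝ) ≤ (H i : ℝ) := by exact_mod_cast this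
        linarith
  · rintro ⟨ℓ, h, hlh, hrep⟩
    constructor
    · intro i hi
      have := (hrep i i).mp hi
      linarith [hlh i]
    · intro i j i' j' hij hij'
      have h1 := (hrep i j).mp hij
      have h2 := (hrep i' j').mp hij'
      rcases le_or_gt (h i) (h i') with hc | hc
      · left; exact (hrep i j').mpr (by linarith)
      · right; exact (hrep i' j).mpr (by linarith)
end

section
/- A binary relation R on a finite set S satisfies, for all i, j, i', j', i'' in S: (1) not i R i, (2) (i R j and i' R j') implies (i R j' or i' R j), and (3) (i R i' and i' R i'') implies (i R j or j R i''), if and only if there exist mappings ℓ, h : S → ℝ and a nonnegative real number r such that for all i, j in S: i R j ⟺ h(i) < ℓ(j), and h(i) − ℓ(i) = r. -/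
namespace SemiorderSS

variable {S : Type*}

/-- An arc: `(true, y)` is a "P-arc" into `y` (requires `R x y`),
`(false, y)` is a "Q-arc" into `y` (requires `¬ R y x`). -/
def Arc (R : S → S → Prop) (x : S) (e : Bool × S) : Prop :=
  cond e.1 (R x e.2) (¬ R e.2 x)

/-- `Valid R x l z` : `l` is a valid walk from `x` to `z`. -/
def Valid (R : S → S → Prop) : S → List (Bool × S) → S → Prop
  | x, [], z => x = z
  | x, e :: t, z => Arc R x e ∧ Valid R e.2 t z

def np (l : List (Bool × S)) : ℕ := l.countP (fun e => e.1)
def nq (l : List (Bool × S)) : ℕ := l.countP (fun e => !e.1)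

@[simp] lemma np_nil : np ([] : List (Bool × S)) = 0 := rfl
@[simp] lemma nq_nil : nq ([] : List (Bool × S)) = 0 := rfl
lemma np_cons (e : Bool × S) (l) :
    np (e :: l) = np l + (if e.1 then 1 else 0) := by
  simp [np, List.countP_cons]
lemma nq_cons (e : Bool × S) (l) :
    nq (e :: l) = nq l + (if e.1 then 0 else 1) := by
  cases h : e.1 <;> simp [nq, List.countP_cons, h]
@[simp] lemma np_append (a b : List (Bool × S)) : np (a ++ b) = np a + np b :=
  List.countP_append
@[simp] lemma nq_append (a b : List (Bool × S)) : nq (a ++ b) = nq a + nq b :=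
  List.countP_append

lemma np_add_nq (l : List (Bool × S)) : np l + nq l = l.length := by
  induction l with
  | nil => rfl
  | cons e t ih =>
      have h1 := np_cons e t
      have h2 := nq_cons e t
      cases h : e.1 <;> simp [h] at h1 h2 <;>
        simp only [h1, h2, List.length_cons] <;> omega

lemma np_le_length (l : List (Bool × S)) : np l ≤ l.length := by
  have := np_add_nq l; omega

variable {R : S → S → Prop}

lemma valid_append {A B : List (Bool × S)} {x z : S} :
    Valid R x (A ++ B) z ↔ ∃ y, Valid R x A y ∧ Valid R y B z := by
  induction A generalizing x with
  | nil => simp [Valid]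
  | cons e t ih =>
      constructor
      · rintro ⟨ha, hv⟩
        have hv' : Valid R e.2 (t ++ B) z := hv
        obtain ⟨y, h1, h2⟩ := ih.mp hv'
        exact ⟨y, ⟨ha, h1⟩, h2⟩
      · rintro ⟨y, ⟨ha, h1⟩, h2⟩
        exact ⟨ha, ih.mpr ⟨y, h1, h2⟩⟩

lemma valid_take_drop {l : List (Bool × S)} {x z : S} (i : ℕ) (hi : i < l.length)
    (h : Valid R x l z) :
    Valid R x (l.take (i+1)) (l.get ⟨i, hi⟩).2 ∧
      Valid R (l.get ⟨i, hi⟩).2 (l.drop (i+1)) z := by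
  induction l generalizing x i with
  | nil => simp at hi
  | cons e t ih =>
      cases i with
      | zero =>
          refine ⟨⟨h.1, rfl⟩, h.2⟩
      | succ i =>
          have hi' : i < t.length := by simpa using hi
          exact ⟨⟨h.1, (ih i hi' h.2).1⟩, (ih i hi' h.2).2⟩


section Axioms

variable (hirr : ∀ i : S, ¬ R i i)
variable (h2 : ∀ i j i' j' : S, R i j → R i' j' → R i j' ∨ R i' j)
variable (h3 : ∀ i i' i'' j : S, R i i' → R i' i'' → R i j ∨ R j i'')

include hirr h2 in
lemma rasym {a b : S} (h : R a b) : ¬ R b a := fun h' =>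
  (h2 a b b a h h').elim (hirr a) (hirr b)

include hirr h3 in
lemma rtrans {a b c : S} (hab : R a b) (hbc : R b c) : R a c :=
  (h3 a b c c hab hbc).elim id (fun h => absurd h (hirr c))

include hirr h3 in
/-- A nonempty walk consisting only of P-arcs certifies `R x z`. -/
lemma pureP {l : List (Bool × S)} {x z : S} (h : Valid R x l z) (hq : nq l = 0)
    (hne : l ≠ []) : R x z := by
  induction l generalizing x with
  | nil => exact absurd rfl hne
  | cons e t ih =>
      obtain ⟨b, y⟩ := e
      cases b with
      | false => simp [nq_cons] at hq
      | true =>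
          have harc : R x y := h.1
          rcases t with _ | ⟨e', t'⟩
          · have : y = z := h.2
            exact this ▸ harc
          · have hq' : nq (e' :: t') = 0 := by simpa [nq_cons] using hq
            exact rtrans hirr h3 harc (ih h.2 hq' (by simp))

include h2 h3 in
/-- The rewriting rule: a mismatched pair of arcs followed by a third arc can be
deleted (the third arc being re-justified from the old source). -/
lemma rewrite_rule {a z : S} {e₁ e₂ e₃ : Bool × S} {rest : List (Bool × S)}
    (h : Valid R a (e₁ :: e₂ :: e₃ :: rest) z) (hne : e₁.1 ≠ e₂.1) :
    Valid R a (e₃ :: rest) z := by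
  obtain ⟨b1, b⟩ := e₁; obtain ⟨b2, c⟩ := e₂; obtain ⟨b3, d⟩ := e₃
  obtain ⟨a1, a2, a3, hrest⟩ : Arc R a (b1, b) ∧ Arc R b (b2, c) ∧
      Arc R c (b3, d) ∧ Valid R d rest z := ⟨h.1, h.2.1, h.2.2.1, h.2.2.2⟩
  refine ⟨?_, hrest⟩
  cases b1 with
  | true =>
      have hb2 : b2 = false := by cases b2 <;> simp_all
      subst hb2
      have hab : R a b := a1
      have hcb : ¬ R c b := a2
      cases b3 with
      | true =>
          have hcd : R c d := a3
          exact (h2 a b c d hab hcd).resolve_right hcb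
      | false =>
          have hdc : ¬ R d c := a3
          intro hda
          exact ((h3 d a b c hda hab).elim hdc hcb : False)
  | false =>
      have hb2 : b2 = true := by cases b2 <;> simp_all
      subst hb2
      have hba : ¬ R b a := a1
      have hbc : R b c := a2
      cases b3 with
      | true =>
          have hcd : R c d := a3
          exact (h3 b c d a hbc hcd).resolve_left hba
      | false =>
          have hdc : ¬ R d c := a3
          intro hda
          exact ((h2 d a b c hda hbc).elim hdc hba : False)

end Axioms

lemma exists_mismatch :
    ∀ (t : List (Bool × S)) (e : Bool × S), (∃ g ∈ e :: t, g.1 ≠ e.1) →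
      ∃ (l₁ : List (Bool × S)) (e₁ e₂ : Bool × S) (l₂ : List (Bool × S)), e :: t = l₁ ++ e₁ :: e₂ :: l₂ ∧ e₁.1 ≠ e₂.1 := by
  intro t
  induction t with
  | nil => rintro e ⟨g, hg, hne⟩; simp at hg; simp [hg] at hne
  | cons e' t' ih =>
      rintro e ⟨g, hg, hne⟩
      by_cases hee : e.1 = e'.1
      · have hg' : g ∈ e' :: t' := by
          rcases List.mem_cons.mp hg with h | h
          · exfalso; rw [h] at hne; exact hne rfl
          · exact h
        obtain ⟨l₁, e₁, e₂, l₂, heq, hmm⟩ := ih e' ⟨g, hg', fun h => hne (h.trans hee.symm)⟩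
        exact ⟨e :: l₁, e₁, e₂, l₂, by rw [heq]; rfl, hmm⟩
      · exact ⟨[], e, e', t', rfl, hee⟩

section Axioms2

variable (hirr : ∀ i : S, ¬ R i i)
variable (h2 : ∀ i j i' j' : S, R i j → R i' j' → R i j' ∨ R i' j)
variable (h3 : ∀ i i' i'' j : S, R i i' → R i' i'' → R i j ∨ R j i'')

include hirr h2 h3 in
/-- The cycle lemma: a nontrivial closed walk can never have at least as many
P-arcs as Q-arcs. -/
lemma no_bad_cycle :
    ∀ (m : ℕ) {x : S} {l : List (Bool × S)}, Valid R x l x → l.length ≤ m →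
      1 ≤ np l → nq l ≤ np l → False := by
  intro m
  induction m with
  | zero =>
      intro x l hv hlen hp _
      rw [List.length_eq_zero_iff.mp (Nat.le_zero.mp hlen)] at hp
      simp at hp
  | succ m ih =>
      intro x l hv hlen hp hqp
      by_cases hq0 : nq l = 0
      · exact hirr x (pureP hirr h3 hv hq0 (by rintro rfl; simp at hp))
      · -- both tags occur; find an adjacent mismatch
        have hqpos : 0 < nq l := Nat.pos_of_ne_zero hq0
        rcases l with _ | ⟨e, t⟩
        · simp at hp
        · have hmix : ∃ g ∈ e :: t, g.1 ≠ e.1 := by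
            cases he : e.1
            · have : ∃ g ∈ e :: t, (fun x : Bool × S => x.1) g :=
                List.countP_pos_iff.mp hp
              obtain ⟨g, hg, hgt⟩ := this
              exact ⟨g, hg, by simp_all⟩
            · have : ∃ g ∈ e :: t, (fun x : Bool × S => !x.1) g :=
                List.countP_pos_iff.mp hqpos
              obtain ⟨g, hg, hgt⟩ := this
              exact ⟨g, hg, by simp_all⟩
          obtain ⟨l₁, e₁, e₂, l₂, heq, hmm⟩ := exists_mismatch t e hmix
          rw [heq] at hv
          obtain ⟨y, hv1, hv2⟩ := valid_append.mp hv
          have hrot : Valid R y ((e₁ :: e₂ :: l₂) ++ l₁) y :=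
            valid_append.mpr ⟨x, hv2, hv1⟩
          have hcount : np (e :: t) = np l₁ + np (e₁ :: e₂ :: l₂) ∧
              nq (e :: t) = nq l₁ + nq (e₁ :: e₂ :: l₂) := by
            rw [heq]; simp
          have hPQ : np (e₁ :: e₂ :: l₂) = np l₂ + 1 ∧
              nq (e₁ :: e₂ :: l₂) = nq l₂ + 1 := by
            cases hb1 : e₁.1 <;> cases hb2 : e₂.1 <;> simp_all [np_cons, nq_cons]
          rcases hl : l₂ ++ l₁ with _ | ⟨e₃, rest⟩
          · -- two-arc mismatched closed walk : immediate contradiction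
            have hl₂ : l₂ = [] := by
              cases l₂ with
              | nil => rfl
              | cons a b => simp at hl
            have hl₁ : l₁ = [] := by
              rcases List.append_eq_nil_iff.mp hl with ⟨_, h⟩; exact h
            subst hl₂; subst hl₁
            have hcl : Valid R y [e₁, e₂] y := by simpa using hrot
            obtain ⟨b1, u⟩ := e₁; obtain ⟨b2, v⟩ := e₂
            obtain ⟨A1, A2, A3⟩ : Arc R y (b1, u) ∧ Arc R u (b2, v) ∧ v = y :=
              ⟨hcl.1, hcl.2.1, hcl.2.2⟩
            subst A3
            cases b1 with
            | true =>
                have hb2 : b2 = false := by cases b2 <;> simp_all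
                subst hb2
                exact (A2 : ¬ R v u) (A1 : R v u)
            | false =>
                have hb2 : b2 = true := by cases b2 <;> simp_all
                subst hb2
                exact (A1 : ¬ R u v) (A2 : R u v)
          · -- length ≥ 3 : rewrite and recurse
            have hrot' : Valid R y (e₁ :: e₂ :: e₃ :: rest) y := by
              simp only [List.cons_append] at hrot
              rw [hl] at hrot; exact hrot
            have hnew : Valid R y (e₃ :: rest) y := rewrite_rule h2 h3 hrot' hmm
            have h3p : np (e₃ :: rest) = np l₂ + np l₁ := by rw [← hl]; simp
            have h3q : nq (e₃ :: rest) = nq l₂ + nq l₁ := by rw [← hl]; simp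
            have h3len : (e₃ :: rest).length = l₂.length + l₁.length := by
              rw [← hl]; simp
            have hlencount : (e :: t).length = l₁.length + (l₂.length + 2) := by
              rw [heq]; simp; try omega
            have hppnn : np (e :: t) + nq (e :: t) = (e :: t).length :=
              np_add_nq _
            have k1 : np (e :: t) = np l₁ + (np l₂ + 1) := by
              rw [hcount.1, hPQ.1]
            have k2 : nq (e :: t) = nq l₁ + (nq l₂ + 1) := by
              rw [hcount.2, hPQ.2]
            have hpos3 : 0 < (e₃ :: rest).length := by simp
            exact ih hnew (by omega) (by omega) (by omega)

end Axioms2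

/-- Auxiliary to `surgery`: the case `i < j` with equal landing vertices. -/
lemma surgery_aux {x z : S} {l : List (Bool × S)} (h : Valid R x l z)
    (i j : Fin l.length) (hlt : i.val < j.val)
    (hfeq : (l.get i).2 = (l.get j).2) :
    ∃ (l₁ l₂ : List (Bool × S)) (y : S), Valid R x l₁ z ∧ Valid R y l₂ y ∧
      0 < l₁.length ∧ 0 < l₂.length ∧ l₁.length + l₂.length = l.length ∧
      np l₁ + np l₂ = np l ∧ nq l₁ + nq l₂ = nq l := by
  obtain ⟨hA, hD⟩ := valid_take_drop i.val i.isLt h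
  set d : List (Bool × S) := l.drop (i.val + 1) with hd
  have hdlen : d.length = l.length - (i.val + 1) := by simp [hd]
  have hk : j.val - i.val - 1 < d.length := by
    have := j.isLt; omega
  have hgetd : (d.get ⟨j.val - i.val - 1, hk⟩) = l.get j := by
    have h1 : d.get ⟨j.val - i.val - 1, hk⟩ = d[j.val - i.val - 1] := rfl
    rw [h1]
    have h2 : d[j.val - i.val - 1] = l[(i.val + 1) + (j.val - i.val - 1)] := by
      simp [hd]
    rw [h2]
    have h3 : (i.val + 1) + (j.val - i.val - 1) = j.val := by omega
    simp_rw [h3]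
    rfl
  obtain ⟨hB, hC⟩ := valid_take_drop (j.val - i.val - 1) hk hD
  rw [hgetd] at hB hC
  have hji : j.val - i.val - 1 + 1 = j.val - i.val := by omega
  rw [hji] at hB hC
  have hdropdrop : d.drop (j.val - i.val) = l.drop (j.val + 1) := by
    rw [hd, List.drop_drop]
    congr 1
    omega
  rw [hdropdrop] at hC
  rw [← hfeq] at hB hC
  refine ⟨l.take (i.val + 1) ++ l.drop (j.val + 1), d.take (j.val - i.val),
    (l.get i).2, valid_append.mpr ⟨(l.get i).2, hA, hC⟩, hB, ?_, ?_, ?_, ?_, ?_⟩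
  · simp [List.length_take]
  · have := j.isLt
    simp [List.length_take, hdlen]
    omega
  · have h1 : l.take (i.val+1) ++ d = l := by
      rw [hd]; exact List.take_append_drop _ _
    have h2 : d.take (j.val - i.val) ++ l.drop (j.val + 1) = d := by
      conv_rhs => rw [← List.take_append_drop (j.val - i.val) d]
      rw [hdropdrop]
    have e1 : (l.take (i.val+1)).length + d.length = l.length := by
      rw [← List.length_append, h1]
    have e2 : (d.take (j.val - i.val)).length + (l.drop (j.val+1)).length
        = d.length := by
      rw [← List.length_append, h2]
    simp only [List.length_append]
    omega
  · have h1 : l.take (i.val+1) ++ d = l := by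
      rw [hd]; exact List.take_append_drop _ _
    have h2 : d.take (j.val - i.val) ++ l.drop (j.val + 1) = d := by
      conv_rhs => rw [← List.take_append_drop (j.val - i.val) d]
      rw [hdropdrop]
    have e1 : np (l.take (i.val+1)) + np d = np l := by
      rw [← np_append, h1]
    have e2 : np (d.take (j.val - i.val)) + np (l.drop (j.val+1)) = np d := by
      rw [← np_append, h2]
    simp only [np_append]
    omega
  · have h1 : l.take (i.val+1) ++ d = l := by
      rw [hd]; exact List.take_append_drop _ _
    have h2 : d.take (j.val - i.val) ++ l.drop (j.val + 1) = d := by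
      conv_rhs => rw [← List.take_append_drop (j.val - i.val) d]
      rw [hdropdrop]
    have e1 : nq (l.take (i.val+1)) + nq d = nq l := by
      rw [← nq_append, h1]
    have e2 : nq (d.take (j.val - i.val)) + nq (l.drop (j.val+1)) = nq d := by
      rw [← nq_append, h2]
    simp only [nq_append]
    omega


/-- Cutting a closed subwalk out of a long walk. -/
lemma surgery [Fintype S] {x z : S} {l : List (Bool × S)} (h : Valid R x l z)
    (hlong : Fintype.card S < l.length) :
    ∃ (l₁ l₂ : List (Bool × S)) (y : S), Valid R x l₁ z ∧ Valid R y l₂ y ∧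
      0 < l₁.length ∧ 0 < l₂.length ∧ l₁.length + l₂.length = l.length ∧
      np l₁ + np l₂ = np l ∧ nq l₁ + nq l₂ = nq l := by
  classical
  have hcard : Fintype.card S < Fintype.card (Fin l.length) := by simpa using hlong
  obtain ⟨i, j, hij, hfeq⟩ :=
    Fintype.exists_ne_map_eq_of_card_lt (fun i : Fin l.length => (l.get i).2) hcard
  -- normalize to i < j
  rcases lt_or_gt_of_ne (Fin.val_ne_of_ne hij) with hlt | hlt
  case _ => exact surgery_aux h i j hlt hfeq
  case _ => exact surgery_aux h j i hlt hfeq.symm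

/-- Weight of a walk : `K+1` for each P-arc, `-K` for each Q-arc. -/
def wt (K : ℤ) (l : List (Bool × S)) : ℤ := (K + 1) * np l - K * nq l

section Weights

variable [Fintype S]
variable (hirr : ∀ i : S, ¬ R i i)
variable (h2 : ∀ i j i' j' : S, R i j → R i' j' → R i j' ∨ R i' j)
variable (h3 : ∀ i i' i'' j : S, R i i' → R i' i'' → R i j ∨ R j i'')

include hirr h2 h3 in
lemma closed_wt_nonpos :
    ∀ (m : ℕ) {x : S} {l : List (Bool × S)}, Valid R x l x → l.length ≤ m →
      wt (Fintype.card S) l ≤ 0 := by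
  intro m
  induction m with
  | zero =>
      intro x l hv hlen
      rw [List.length_eq_zero_iff.mp (Nat.le_zero.mp hlen)]
      simp [wt]
  | succ m ih =>
      intro x l hv hlen
      set K : ℤ := (Fintype.card S : ℤ) with hK
      have hK0 : 0 ≤ K := by positivity
      by_cases hshort : l.length ≤ Fintype.card S
      · by_cases hnp : np l = 0
        · have : (0:ℤ) ≤ K * nq l := by positivity
          simp only [wt, hnp]
          push_cast
          linarith
        · have hple : 1 ≤ np l := Nat.one_le_iff_ne_zero.mpr hnp
          have hqgt : ¬ nq l ≤ np l := fun hqp =>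
            no_bad_cycle hirr h2 h3 l.length hv le_rfl hple hqp
          have hq : np l + 1 ≤ nq l := by omega
          have hplen : np l ≤ l.length := np_le_length l
          have hcast : (np l : ℤ) + 1 ≤ (nq l : ℤ) := by exact_mod_cast hq
          have hcast2 : (np l : ℤ) ≤ K := by
            rw [hK]
            exact_mod_cast hplen.trans hshort
          have : wt K l ≤ (np l : ℤ) - K := by
            simp only [wt]
            nlinarith [hK0, hcast, hcast2]
          linarith
      · obtain ⟨l₁, l₂, y, hv1, hv2, hpos1, hpos2, hlensum, hnpsum, hnqsum⟩ :=
          surgery hv (by omega)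
        have hw : wt K l = wt K l₁ + wt K l₂ := by
          simp only [wt, ← hnpsum, ← hnqsum]
          push_cast
          ring
        have b1 : wt K l₁ ≤ 0 := ih hv1 (by omega)
        have b2 : wt K l₂ ≤ 0 := ih hv2 (by omega)
        omega

include hirr h2 h3 in
lemma wt_le_bound :
    ∀ (m : ℕ) {x z : S} {l : List (Bool × S)}, Valid R x l z → l.length ≤ m →
      wt (Fintype.card S) l ≤ ((Fintype.card S : ℤ) + 1) * Fintype.card S := by
  intro m
  induction m with
  | zero =>
      intro x z l hv hlen
      rw [List.length_eq_zero_iff.mp (Nat.le_zero.mp hlen)]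
      have : (0:ℤ) ≤ ((Fintype.card S : ℤ) + 1) * Fintype.card S := by positivity
      simp only [wt, np_nil, nq_nil]
      simp only [Nat.cast_zero, mul_zero, sub_zero]
      exact this
  | succ m ih =>
      intro x z l hv hlen
      set K : ℤ := (Fintype.card S : ℤ) with hK
      have hK0 : 0 ≤ K := by positivity
      by_cases hshort : l.length ≤ Fintype.card S
      · have h1 : wt K l ≤ (K+1) * np l := by
          have : (0:ℤ) ≤ K * nq l := by positivity
          simp only [wt]; linarith
        have h2' : (np l : ℤ) ≤ K := by
          rw [hK]; exact_mod_cast (np_le_length l).trans hshort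
        calc wt K l ≤ (K+1) * np l := h1
          _ ≤ (K+1) * K := by nlinarith
      · obtain ⟨l₁, l₂, y, hv1, hv2, hpos1, hpos2, hlensum, hnpsum, hnqsum⟩ :=
          surgery hv (by omega)
        have hw : wt K l = wt K l₁ + wt K l₂ := by
          simp only [wt, ← hnpsum, ← hnqsum]
          push_cast
          ring
        have b1 : wt K l₁ ≤ (K+1) * K := ih hv1 (by omega)
        have b2 : wt K l₂ ≤ 0 := closed_wt_nonpos hirr h2 h3 l₂.length hv2 le_rfl
        omega

end Weights

end SemiorderSS

open SemiorderSS in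
/-- **Proposition (Semiorder, Scott–Suppes).** A binary relation `R` on a finite set `S`
is irreflexive and satisfies the two semiorder axioms if and only if there exist mappings
`ℓ, h : S → ℝ` and a nonnegative real `r` such that `i R j ↔ h i < ℓ j` and
`h i - ℓ i = r` for all `i`, `j`. -/
theorem semiorder_iff_constant_threshold_representation {S : Type*} [Fintype S]
    (R : S → S → Prop) :
    ((∀ i, ¬ R i i) ∧
      (∀ i j i' j', R i j → R i' j' → R i j' ∨ R i' j) ∧
      (∀ i i' i'' j, R i i' → R i' i'' → R i j ∨ R j i'')) ↔
    ∃ (ℓ h : S → ℝ) (r : ℝ), 0 ≤ r ∧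
      (∀ i j, (R i j ↔ h i < ℓ j)) ∧ (∀ i, h i - ℓ i = r) := by
  constructor
  · rintro ⟨hirr, hax2, hax3⟩
    classical
    set K : ℤ := (Fintype.card S : ℤ) with hK
    have hK0 : (0:ℤ) ≤ K := by positivity
    have hex : ∀ x : S, ∃ ux : ℤ,
        (∃ (s : S) (l : List (Bool × S)), Valid R s l x ∧ wt K l = ux) ∧
        ∀ w : ℤ, (∃ (s : S) (l : List (Bool × S)), Valid R s l x ∧ wt K l = w) →
          w ≤ ux := by
      intro x
      apply Int.exists_greatest_of_bdd
      · refine ⟨(K + 1) * K, ?_⟩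
        rintro w ⟨s, l, hv, hw⟩
        rw [← hw, hK]
        exact wt_le_bound hirr hax2 hax3 l.length hv le_rfl
      · exact ⟨0, x, [], rfl, by simp [wt]⟩
    choose u hu hmax using hex
    have harcP : ∀ x y : S, R x y → u x + (K + 1) ≤ u y := by
      intro x y hxy
      obtain ⟨s, l, hv, hw⟩ := hu x
      have harc : Arc R x (true, y) := hxy
      have hv' : Valid R s (l ++ [(true, y)]) y :=
        valid_append.mpr ⟨x, hv, harc, rfl⟩
      have hnp : np ([((true : Bool), y)] : List (Bool × S)) = 1 := by
        simp [np, List.countP_cons]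
      have hnq : nq ([((true : Bool), y)] : List (Bool × S)) = 0 := by
        simp [nq, List.countP_cons]
      have hwt : wt K (l ++ [(true, y)]) = wt K l + (K + 1) := by
        simp only [wt, np_append, nq_append, hnp, hnq]
        push_cast
        ring
      have := hmax y _ ⟨s, _, hv', hwt⟩
      omega
    have harcQ : ∀ x y : S, ¬ R x y → u y ≤ u x + K := by
      intro x y hxy
      obtain ⟨s, l, hv, hw⟩ := hu y
      have harc : Arc R y (false, x) := hxy
      have hv' : Valid R s (l ++ [(false, x)]) x :=
        valid_append.mpr ⟨y, hv, harc, rfl⟩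
      have hnp : np ([((false : Bool), x)] : List (Bool × S)) = 0 := by
        simp [np, List.countP_cons]
      have hnq : nq ([((false : Bool), x)] : List (Bool × S)) = 1 := by
        simp [nq, List.countP_cons]
      have hwt : wt K (l ++ [(false, x)]) = wt K l - K := by
        simp only [wt, np_append, nq_append, hnp, hnq]
        push_cast
        ring
      have := hmax x _ ⟨s, _, hv', hwt⟩
      omega
    refine ⟨fun i => (u i : ℝ), fun i => (u i : ℝ) + ((K : ℝ) + 1/2),
      (K : ℝ) + 1/2, by positivity, ?_, fun i => by ring⟩
    intro i j
    constructor
    · intro hij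
      have h1 := harcP i j hij
      have h1' : ((u i : ℝ)) + ((K : ℝ) + 1) ≤ (u j : ℝ) := by exact_mod_cast h1
      linarith
    · intro hlt
      by_contra hij
      have h1 := harcQ i j hij
      have h1' : ((u j : ℝ)) ≤ (u i : ℝ) + (K : ℝ) := by exact_mod_cast h1
      linarith
  · rintro ⟨ℓ, h, r, hr, hrep, hdiff⟩
    refine ⟨?_, ?_, ?_⟩
    · intro i hi
      have := (hrep i i).mp hi
      have := hdiff i
      linarith
    · intro i j i' j' hij hij'
      have a := (hrep i j).mp hij
      have b := (hrep i' j').mp hij'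
      by_contra hc
      rw [not_or] at hc
      have c1 : ¬ (h i < ℓ j') := fun hh => hc.1 ((hrep i j').mpr hh)
      have c2 : ¬ (h i' < ℓ j) := fun hh => hc.2 ((hrep i' j).mpr hh)
      push_neg at c1 c2
      linarith
    · intro i i' i'' j hii' hi'i''
      have a := (hrep i i').mp hii'
      have b := (hrep i' i'').mp hi'i''
      by_contra hc
      rw [not_or] at hc
      have c1 : ¬ (h i < ℓ j) := fun hh => hc.1 ((hrep i j).mpr hh)
      have c2 : ¬ (h j < ℓ i'') := fun hh => hc.2 ((hrep j i'').mpr hh)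
      push_neg at c1 c2
      have := hdiff i'
      have := hdiff j
      linarith
end

section
/- A binary relation R on a finite set S is a semiorder if and only if there exist mappings ℓ, h : S → ℝ such that for all i, j in S: (1) ℓ(i) ≤ h(i), (2) i R j ⟺ h(i) < ℓ(j), and (3) ℓ(i) < ℓ(j) implies h(i) ≤ h(j). -/
/-- **Proposition (Semiorders have representations with no strictly included interval).**
A binary relation `R` on a finite set `S` is a semiorder if and only if there exist
mappings `ℓ, h : S → ℝ` such that `ℓ i ≤ h i`, `i R j ↔ h i < ℓ j`, and
`ℓ i < ℓ j → h i ≤ h j`, for all `i`, `j`. -/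
theorem semiorder_iff_no_strict_inclusion_representation {S : Type*} [Fintype S]
    (R : S → S → Prop) :
    ((∀ i, ¬ R i i) ∧
      (∀ i j i' j', R i j → R i' j' → R i j' ∨ R i' j) ∧
      (∀ i i' i'' j, R i i' → R i' i'' → R i j ∨ R j i'')) ↔
    ∃ ℓ h : S → ℝ,
      (∀ i, ℓ i ≤ h i) ∧
      (∀ i j, (R i j ↔ h i < ℓ j)) ∧
      (∀ i j, ℓ i < ℓ j → h i ≤ h j) := by
  classical
  constructor
  · rintro ⟨irr, ax1, ax2⟩
    -- the trace of the semiorder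
    set T : S → S → Prop := fun i j => (∀ k, R k i → R k j) ∧ (∀ k, R j k → R i k)
      with hTdef
    have Trefl : ∀ i, T i i := fun i => ⟨fun _ h => h, fun _ h => h⟩
    have Ttrans : ∀ i j k, T i j → T j k → T i k := by
      intro i j k hij hjk
      exact ⟨fun m hm => hjk.1 m (hij.1 m hm), fun m hm => hij.2 m (hjk.2 m hm)⟩
    -- the trace is total
    have key : ∀ i j, ¬ T i j → T j i := by
      intro i j hne
      have hne' : (∃ k, R k i ∧ ¬ R k j) ∨ (∃ k, R j k ∧ ¬ R i k) := by
        by_contra hc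
        push_neg at hc
        exact hne ⟨fun k hk => hc.1 k hk, fun k hk => hc.2 k hk⟩
      constructor
      · intro m hm
        rcases hne' with ⟨k, hk1, hk2⟩ | ⟨k, hk1, hk2⟩
        · rcases ax1 k i m j hk1 hm with h | h
          · exact absurd h hk2
          · exact h
        · rcases ax2 m j k i hm hk1 with h | h
          · exact h
          · exact absurd h hk2
      · intro m hm
        rcases hne' with ⟨k, hk1, hk2⟩ | ⟨k, hk1, hk2⟩
        · rcases ax2 k i m j hk1 hm with h | h
          · exact absurd h hk2
          · exact h
        · rcases ax1 j k i m hk1 hm with h | h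
          · exact h
          · exact absurd h hk2
    -- a utility for the trace
    set f : S → ℕ := fun i => (Finset.univ.filter (fun k => T k i)).card with hfdef
    have fmono : ∀ i j, T i j → f i ≤ f j := by
      intro i j hij
      apply Finset.card_le_card
      intro k hk
      simp only [Finset.mem_filter, Finset.mem_univ, true_and] at hk ⊢
      exact Ttrans k i j hk hij
    have fstrict : ∀ i j, ¬ T j i → f i < f j := by
      intro i j hji
      have hij : T i j := key j i hji
      apply Finset.card_lt_card
      constructor
      · intro k hk
        simp only [Finset.mem_filter, Finset.mem_univ, true_and] at hk ⊢
        exact Ttrans k i j hk hij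
      · intro hsub
        have := hsub (Finset.mem_filter.mpr ⟨Finset.mem_univ j, Trefl j⟩)
        simp only [Finset.mem_filter, Finset.mem_univ, true_and] at this
        exact hji this
    have frev : ∀ i j, f i < f j → ¬ T j i := by
      intro i j hlt hji
      exact absurd (fmono j i hji) (by omega)
    -- the upper endpoints
    have hne : ∀ i, ((Finset.univ.filter (fun j => ¬ R i j)).image f).Nonempty := by
      intro i
      exact ⟨f i, Finset.mem_image.mpr ⟨i, by simp [irr i], rfl⟩⟩
    set H : S → ℕ := fun i => ((Finset.univ.filter (fun j => ¬ R i j)).image f).max' (hne i)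
      with hHdef
    have Hmem : ∀ i j, ¬ R i j → f j ≤ H i := by
      intro i j hij
      exact Finset.le_max' _ _ (Finset.mem_image.mpr ⟨j, by simp [hij], rfl⟩)
    have Hwit : ∀ i, ∃ j, ¬ R i j ∧ H i = f j := by
      intro i
      have := Finset.max'_mem _ (hne i)
      rw [Finset.mem_image] at this
      obtain ⟨j, hj, hj2⟩ := this
      simp only [Finset.mem_filter, Finset.mem_univ, true_and] at hj
      exact ⟨j, hj, hj2.symm⟩
    refine ⟨fun i => (f i : ℝ), fun i => (H i : ℝ), ?_, ?_, ?_⟩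
    · intro i
      show (f i : ℝ) ≤ (H i : ℝ)
      exact_mod_cast Hmem i i (irr i)
    · intro i j
      constructor
      · intro hR
        obtain ⟨j₀, hj₀, hHij₀⟩ := Hwit i
        have : f j₀ < f j := by
          apply fstrict
          intro hT
          exact hj₀ (hT.1 i hR)
        show (H i : ℝ) < (f j : ℝ)
        rw [hHij₀]
        exact_mod_cast this
      · intro hlt
        have hlt : (H i : ℝ) < (f j : ℝ) := hlt
        by_contra hR
        have := Hmem i j hR
        have : (f j : ℝ) ≤ (H i : ℝ) := by exact_mod_cast this
        linarith
    · intro i j hlt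
      have hlt : (f i : ℝ) < (f j : ℝ) := hlt
      have hlt' : f i < f j := by exact_mod_cast hlt
      have hij : T i j := key j i (frev i j hlt')
      obtain ⟨j₀, hj₀, hHij₀⟩ := Hwit i
      have : ¬ R j j₀ := fun h => hj₀ (hij.2 j₀ h)
      have := Hmem j j₀ this
      show (H i : ℝ) ≤ (H j : ℝ)
      rw [hHij₀]
      exact_mod_cast this
  · rintro ⟨ℓ, h, h1, h2, h3⟩
    refine ⟨?_, ?_, ?_⟩
    · intro i hRi
      rw [h2] at hRi
      linarith [h1 i]
    · intro i j i' j' hij hij'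
      rw [h2] at hij hij' ⊢
      rw [h2]
      by_contra hc
      push_neg at hc
      linarith [hc.1, hc.2]
    · intro i i' i'' j hii' hi'i''
      rw [h2] at hii' hi'i''
      rw [h2, h2]
      by_contra hc
      push_neg at hc
      obtain ⟨hc1, hc2⟩ := hc
      have : ℓ j < ℓ i' := by linarith
      have := h3 j i' this
      linarith [h1 i']
end

section
/- Every interval order R on a finite set S admits a representation by mappings ℓ, h : S → ℝ such that ℓ and h are both injective, the image sets ℓ(S) and h(S) are disjoint, ℓ(i) ≤ h(i) for all i in S, and i R j ⟺ h(i) < ℓ(j) for all i, j in S. -/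
open Classical in
/-- strict predecessor set -/
noncomputable def ioDD {S : Type*} [Fintype S] (R : S → S → Prop) (i : S) : Finset S :=
  Finset.univ.filter (fun k => R k i)

open Classical in
/-- strict successor set -/
noncomputable def ioUU {S : Type*} [Fintype S] (R : S → S → Prop) (i : S) : Finset S :=
  Finset.univ.filter (fun j => R i j)

noncomputable def ioL {S : Type*} [Fintype S] (R : S → S → Prop) (i : S) : ℤ :=
  2 * (ioDD R i).card

noncomputable def ioH {S : Type*} [Fintype S] (R : S → S → Prop) (i : S) : ℤ :=
  if h : (ioUU R i).Nonempty then
    2 * (ioUU R i).inf' h (fun j => ((ioDD R j).card : ℤ)) - 1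
  else 2 * Fintype.card S

lemma ioDD_mem {S : Type*} [Fintype S] (R : S → S → Prop) (k i : S) :
    k ∈ ioDD R i ↔ R k i := by
  classical
  simp [ioDD]

lemma ioUU_mem {S : Type*} [Fintype S] (R : S → S → Prop) (i j : S) :
    j ∈ ioUU R i ↔ R i j := by
  classical
  simp [ioUU]

/-- The predecessor sets form a chain. -/
lemma ioDD_chain {S : Type*} [Fintype S] (R : S → S → Prop)
    (h_io : ∀ i j i' j', R i j → R i' j' → R i j' ∨ R i' j)
    {j j' : S} (hc : (ioDD R j').card ≤ (ioDD R j).card) : ioDD R j' ⊆ ioDD R j := by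
  by_cases hs : ioDD R j' ⊆ ioDD R j
  · exact hs
  · obtain ⟨a, ha, hna⟩ := Finset.not_subset.mp hs
    have hsub : ioDD R j ⊆ ioDD R j' := by
      intro b hb
      rw [ioDD_mem] at *
      rcases h_io b j a j' hb ha with h1 | h2
      · exact h1
      · exact (hna h2).elim
    have := Finset.eq_of_subset_of_card_le hsub hc
    rw [this]

lemma ioDD_lt_of_R {S : Type*} [Fintype S] (R : S → S → Prop)
    (h_irr : ∀ i, ¬ R i i)
    (h_io : ∀ i j i' j', R i j → R i' j' → R i j' ∨ R i' j)
    {i j : S} (hij : R i j) : (ioDD R i).card < (ioDD R j).card := by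
  have hsub : ioDD R i ⊆ ioDD R j := by
    intro a ha
    rw [ioDD_mem] at *
    rcases h_io a i i j ha hij with h1 | h2
    · exact h1
    · exact (h_irr i h2).elim
  apply Finset.card_lt_card
  refine ⟨hsub, ?_⟩
  intro hsub'
  have : i ∈ ioDD R i := hsub' ((ioDD_mem R i j).mpr hij)
  exact h_irr i ((ioDD_mem R i i).mp this)

lemma ioH_lt_ioL_of_R {S : Type*} [Fintype S] (R : S → S → Prop)
    {i j : S} (hij : R i j) : ioH R i < ioL R j := by
  have hne : (ioUU R i).Nonempty := ⟨j, (ioUU_mem R i j).mpr hij⟩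
  rw [ioH, dif_pos hne, ioL]
  have : (ioUU R i).inf' hne (fun j => ((ioDD R j).card : ℤ)) ≤ (ioDD R j).card :=
    Finset.inf'_le _ ((ioUU_mem R i j).mpr hij)
  omega

lemma ioL_lt_ioH_of_not_R {S : Type*} [Fintype S] (R : S → S → Prop)
    (h_irr : ∀ i, ¬ R i i)
    (h_io : ∀ i j i' j', R i j → R i' j' → R i j' ∨ R i' j)
    {i j : S} (hij : ¬ R i j) : ioL R j < ioH R i := by
  classical
  rw [ioL, ioH]
  by_cases hne : (ioUU R i).Nonempty
  · rw [dif_pos hne]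
    obtain ⟨j', hj', heq⟩ := Finset.exists_mem_eq_inf' hne (fun j => ((ioDD R j).card : ℤ))
    rw [heq]
    have hRij' : R i j' := (ioUU_mem R i j').mp hj'
    have hlt : (ioDD R j).card < (ioDD R j').card := by
      by_contra hle
      push_neg at hle
      have hsub := ioDD_chain R h_io hle
      have : i ∈ ioDD R j := hsub ((ioDD_mem R i j').mpr hRij')
      exact hij ((ioDD_mem R i j).mp this)
    omega
  · rw [dif_neg hne]
    have hcard : (ioDD R j).card < Fintype.card S := by
      apply Finset.card_lt_card
      refine ⟨Finset.subset_univ _, ?_⟩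
      intro hsub
      have : j ∈ ioDD R j := hsub (Finset.mem_univ j)
      exact h_irr j ((ioDD_mem R j j).mp this)
    omega

lemma ioL_le_ioH {S : Type*} [Fintype S] (R : S → S → Prop)
    (h_irr : ∀ i, ¬ R i i)
    (h_io : ∀ i j i' j', R i j → R i' j' → R i j' ∨ R i' j)
    (i : S) : ioL R i ≤ ioH R i := by
  rw [ioL, ioH]
  by_cases hne : (ioUU R i).Nonempty
  · rw [dif_pos hne]
    obtain ⟨j', hj', heq⟩ := Finset.exists_mem_eq_inf' hne (fun j => ((ioDD R j).card : ℤ))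
    rw [heq]
    have hRij' : R i j' := (ioUU_mem R i j').mp hj'
    have := ioDD_lt_of_R R h_irr h_io hRij'
    omega
  · rw [dif_neg hne]
    have : (ioDD R i).card ≤ Fintype.card S := Finset.card_le_univ _
    omega

/-- Every interval order `R` on a finite set `S` admits a representation `(ℓ, h)` in which
`ℓ` and `h` are injective and have disjoint ranges. -/
theorem interval_order_injective_disjoint_representation {S : Type*} [Fintype S]
    (R : S → S → Prop)
    (h_irr : ∀ i, ¬ R i i)
    (h_io : ∀ i j i' j', R i j → R i' j' → R i j' ∨ R i' j) :
    ∃ ℓ h : S → ℝ,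
      Function.Injective ℓ ∧ Function.Injective h ∧
      Disjoint (Set.range ℓ) (Set.range h) ∧
      (∀ i, ℓ i ≤ h i) ∧
      (∀ i j, (R i j ↔ h i < ℓ j)) := by
  classical
  set n := Fintype.card S with hn
  let e := Fintype.equivFin S
  set ε : S → ℝ := fun i => (((e i : ℕ) : ℝ) + 1) / (2 * n + 2) with hε
  have hden : (0 : ℝ) < 2 * n + 2 := by positivity
  have hεpos : ∀ i, 0 < ε i := by
    intro i
    apply div_pos _ hden
    positivity
  have hεlt : ∀ i, ε i < 1 := by
    intro i
    rw [div_lt_one hden]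
    have : ((e i : ℕ) : ℝ) < n := by
      exact_mod_cast (e i).isLt
    linarith
  have hεinj : Function.Injective ε := by
    intro i j hij
    simp only [hε] at hij
    rw [div_left_inj' hden.ne', add_left_inj] at hij
    have h2 : (e i : ℕ) = (e j : ℕ) := by exact_mod_cast hij
    exact e.injective (Fin.ext h2)
  set ℓ : S → ℝ := fun i => ((ioL R i : ℤ) : ℝ) + ε i with hℓ
  set h : S → ℝ := fun i => ((ioH R i : ℤ) : ℝ) + ε i with hh
  have key : ∀ (a b : ℤ) (i j : S), a < b → ((a : ℝ) + ε i) < ((b : ℝ) + ε j) := by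
    intro a b i j hab
    have h1 : (a : ℝ) + 1 ≤ (b : ℝ) := by exact_mod_cast hab
    have := hεlt i
    have := hεpos j
    linarith
  refine ⟨ℓ, h, ?_, ?_, ?_, ?_, ?_⟩
  · -- ℓ injective
    intro i j hij
    have hLL : ioL R i = ioL R j := by
      by_contra hne
      rcases lt_or_gt_of_ne hne with hlt | hlt
      · exact absurd hij (ne_of_lt (key _ _ i j hlt))
      · exact absurd hij.symm (ne_of_lt (key _ _ j i hlt))
    apply hεinj
    have : ((ioL R i : ℤ) : ℝ) + ε i = ((ioL R j : ℤ) : ℝ) + ε j := hij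
    rw [hLL] at this
    linarith
  · -- h injective
    intro i j hij
    have hHH : ioH R i = ioH R j := by
      by_contra hne
      rcases lt_or_gt_of_ne hne with hlt | hlt
      · exact absurd hij (ne_of_lt (key _ _ i j hlt))
      · exact absurd hij.symm (ne_of_lt (key _ _ j i hlt))
    apply hεinj
    have : ((ioH R i : ℤ) : ℝ) + ε i = ((ioH R j : ℤ) : ℝ) + ε j := hij
    rw [hHH] at this
    linarith
  · -- disjoint ranges
    rw [Set.disjoint_left]
    rintro x ⟨i, rfl⟩ ⟨j, hji⟩
    have hji' : ((ioH R j : ℤ) : ℝ) + ε j = ((ioL R i : ℤ) : ℝ) + ε i := hji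
    by_cases hR : R j i
    · have := key _ _ j i (ioH_lt_ioL_of_R R hR)
      linarith
    · have := key _ _ i j (ioL_lt_ioH_of_not_R R h_irr h_io hR)
      linarith
  · -- ℓ ≤ h
    intro i
    have h1 : ((ioL R i : ℤ) : ℝ) ≤ ((ioH R i : ℤ) : ℝ) := by
      exact_mod_cast ioL_le_ioH R h_irr h_io i
    simp only [hℓ, hh]
    linarith
  · -- representation
    intro i j
    constructor
    · intro hR
      exact key _ _ i j (ioH_lt_ioL_of_R R hR)
    · intro hlt
      by_contra hR
      have := key _ _ j i (ioL_lt_ioH_of_not_R R h_irr h_io hR)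
      simp only [hℓ, hh] at hlt this
      linarith
end

section
/- Every semiorder R on a finite set S admits a representation by mappings ℓ, h : S → ℝ such that ℓ and h are both injective, the image sets ℓ(S) and h(S) are disjoint, and for all i, j in S: ℓ(i) ≤ h(i), i R j ⟺ h(i) < ℓ(j), and ℓ(i) < ℓ(j) implies h(i) ≤ h(j). -/
open Finset

/-- Every semiorder `R` on a finite set `S` admits a representation `(ℓ, h)` in which
`ℓ` and `h` are injective with disjoint ranges and no interval strictly includes
another one. -/
theorem semiorder_injective_disjoint_representation {S : Type*} [Fintype S]
    (R : S → S → Prop)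
    (h_irr : ∀ i, ¬ R i i)
    (h_io : ∀ i j i' j', R i j → R i' j' → R i j' ∨ R i' j)
    (h_so : ∀ i i' i'' j, R i i' → R i' i'' → R i j ∨ R j i'') :
    ∃ ℓ h : S → ℝ,
      Function.Injective ℓ ∧ Function.Injective h ∧
      Disjoint (Set.range ℓ) (Set.range h) ∧
      (∀ i, ℓ i ≤ h i) ∧
      (∀ i j, (R i j ↔ h i < ℓ j)) ∧
      (∀ i j, ℓ i < ℓ j → h i ≤ h j) := by
  classical
  set n := Fintype.card S with hn
  set P : S → Finset S := fun i => univ.filter (fun k => R k i) with hP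
  set L : S → ℕ := fun i => (P i).card with hLdef
  set N : S → Finset S := fun i => univ.filter (fun k => ¬ R i k) with hNdef
  have hNmem : ∀ i k, k ∈ N i ↔ ¬ R i k := by
    intro i k; simp [hNdef]
  have hPmem : ∀ i k, k ∈ P i ↔ R k i := by
    intro i k; simp [hP]
  have hNne : ∀ i, ((N i).image L).Nonempty := by
    intro i
    have : (N i).Nonempty := ⟨i, (hNmem i i).2 (h_irr i)⟩
    exact this.image L
  set H : S → ℕ := fun i => ((N i).image L).max' (hNne i) with hHdef
  have hLle : ∀ i, L i ≤ n := fun i => Finset.card_le_univ (P i)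
  have hHle : ∀ i, H i ≤ n := by
    intro i
    apply Finset.max'_le
    intro y hy
    obtain ⟨k, -, rfl⟩ := Finset.mem_image.mp hy
    exact hLle k
  -- ¬ R i j → L j ≤ H i
  have hLH : ∀ i j, ¬ R i j → L j ≤ H i := by
    intro i j hij
    exact Finset.le_max' _ _ (Finset.mem_image_of_mem L ((hNmem i j).2 hij))
  have hLHi : ∀ i, L i ≤ H i := fun i => hLH i i (h_irr i)
  -- R i j → H i < L j
  have hfwd : ∀ i j, R i j → H i < L j := by
    intro i j hij
    apply (Finset.max'_lt_iff _ (hNne i)).2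
    intro y hy
    obtain ⟨k, hk, rfl⟩ := Finset.mem_image.mp hy
    have hk : ¬ R i k := (hNmem i k).1 hk
    have hsub : P k ⊆ P j := by
      intro m hm
      rcases h_io m k i j ((hPmem k m).1 hm) hij with h | h
      · exact (hPmem j m).2 h
      · exact absurd h hk
    have hne : P k ≠ P j := by
      intro he
      exact hk ((hPmem k i).1 (he ▸ (hPmem j i).2 hij))
    exact Finset.card_lt_card (Finset.ssubset_iff_subset_ne.mpr ⟨hsub, hne⟩)
  -- predecessor sets form a chain
  have hchain : ∀ i j, P i ⊆ P j ∨ P j ⊆ P i := by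
    intro i j
    by_contra hc
    push_neg at hc
    obtain ⟨a, ha, ha'⟩ := Finset.not_subset.mp hc.1
    obtain ⟨b, hb, hb'⟩ := Finset.not_subset.mp hc.2
    rcases h_io a i b j ((hPmem i a).1 ha) ((hPmem j b).1 hb) with h | h
    · exact ha' ((hPmem j a).2 h)
    · exact hb' ((hPmem i b).2 h)
  -- L i < L j → N i ⊆ N j
  have hNmono : ∀ i j, L i < L j → N i ⊆ N j := by
    intro i j hij
    have hij' : (P i).card < (P j).card := hij
    have hsub : P i ⊆ P j := by
      rcases hchain i j with h | h
      · exact h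
      · exact absurd (Finset.card_le_card h) (by omega)
    have hne : P i ≠ P j := by
      intro he
      rw [he] at hij'
      omega
    obtain ⟨m, hmj, hmi⟩ :=
      Finset.exists_of_ssubset (Finset.ssubset_iff_subset_ne.mpr ⟨hsub, hne⟩)
    intro k hk
    have hik : ¬ R i k := (hNmem i k).1 hk
    apply (hNmem j k).2
    intro hjk
    rcases h_so m j k i ((hPmem j m).1 hmj) hjk with h | h
    · exact hmi ((hPmem i m).2 h)
    · exact hik h
  have hHmono : ∀ i j, L i < L j → H i ≤ H j := by
    intro i j hij
    apply Finset.max'_le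
    intro y hy
    exact Finset.le_max' _ _ (Finset.image_subset_image (hNmono i j hij) hy)
  -- tie-breaking rank
  set t : S → ℕ := fun i => ((Fintype.equivFin S) i : ℕ) with htdef
  have ht_inj : Function.Injective t := by
    intro i j h
    exact (Fintype.equivFin S).injective (Fin.val_injective h)
  have htlt : ∀ i, t i < n := fun i => ((Fintype.equivFin S) i).isLt
  set B : ℕ := n + 1 with hB
  set key : S → ℕ := fun i => L i * B * B + H i * B + t i with hkey
  have hdig : ∀ i, H i * B + t i < B * B := by
    intro i
    have h1 := hHle i
    have h2 := htlt i
    calc H i * B + t i < (H i + 1) * B := by nlinarith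
    _ ≤ B * B := Nat.mul_le_mul_right _ (by omega)
  have hkey1 : ∀ i j, L i < L j → key i < key j := by
    intro i j h
    have : key i < (L i + 1) * B * B := by
      have := hdig i
      simp only [hkey]
      nlinarith
    calc key i < (L i + 1) * B * B := this
    _ ≤ L j * B * B := by
        apply Nat.mul_le_mul_right
        exact Nat.mul_le_mul_right _ (by omega)
    _ ≤ key j := by simp only [hkey]; omega
  have hkey2 : ∀ i j, L i = L j → H i < H j → key i < key j := by
    intro i j hL h
    simp only [hkey, hL]
    have h1 : H i * B + t i < H j * B + t j := by
      have := htlt i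
      calc H i * B + t i < (H i + 1) * B := by nlinarith
      _ ≤ H j * B := Nat.mul_le_mul_right _ (by omega)
      _ ≤ H j * B + t j := Nat.le_add_right _ _
    omega
  have hkey_inj : Function.Injective key := by
    intro i j h
    rcases lt_trichotomy (L i) (L j) with h1 | h1 | h1
    · exact absurd h (Nat.ne_of_lt (hkey1 i j h1))
    · rcases lt_trichotomy (H i) (H j) with h2 | h2 | h2
      · exact absurd h (Nat.ne_of_lt (hkey2 i j h1 h2))
      · apply ht_inj
        simp only [hkey, h1, h2] at h
        omega
      · exact absurd h.symm (Nat.ne_of_lt (hkey2 j i h1.symm h2))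
    · exact absurd h.symm (Nat.ne_of_lt (hkey1 j i h1))
  set e : S → ℕ := fun i => (univ.filter (fun m => key m < key i)).card with hedef
  have he_mono : ∀ i j, key i < key j → e i < e j := by
    intro i j h
    apply Finset.card_lt_card
    constructor
    · intro m hm
      simp only [Finset.mem_filter, Finset.mem_univ, true_and] at hm ⊢
      omega
    · intro hsub
      have : i ∈ univ.filter (fun m => key m < key j) := by
        simp only [Finset.mem_filter, Finset.mem_univ, true_and]; exact h
      have := hsub this
      simp only [Finset.mem_filter] at this
      omega
  have he_lt : ∀ i j, e i < e j → key i < key j := by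
    intro i j h
    by_contra h'
    push_neg at h'
    rcases eq_or_lt_of_le h' with h'' | h''
    · have hij : i = j := hkey_inj h''.symm
      subst hij
      exact lt_irrefl _ h
    · exact absurd (he_mono j i h'') (by omega)
  have he_inj : Function.Injective e := by
    intro i j h
    apply hkey_inj
    rcases lt_trichotomy (key i) (key j) with h1 | h1 | h1
    · exact absurd (he_mono i j h1) (by omega)
    · exact h1
    · exact absurd (he_mono j i h1) (by omega)
  have helt : ∀ i, e i ≤ n := fun i => Finset.card_le_univ _
  -- real parameters
  set ε : ℝ := 1 / (4 * ((n : ℝ) + 1)) with hε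
  have hnpos : (0 : ℝ) < (n : ℝ) + 1 := by positivity
  have hεpos : 0 < ε := by rw [hε]; positivity
  set E : S → ℝ := fun i => (e i : ℝ) * ε with hEdef
  have hE0 : ∀ i, 0 ≤ E i := fun i => mul_nonneg (Nat.cast_nonneg _) (le_of_lt hεpos)
  have hE4 : ∀ i, E i < 1 / 4 := by
    intro i
    have h1 : (e i : ℝ) ≤ n := Nat.cast_le.mpr (helt i)
    have h2 : ((n : ℝ) + 1) * ε = 1 / 4 := by
      rw [hε]; field_simp
    have h3 : E i ≤ (n : ℝ) * ε := by
      rw [hEdef]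
      exact mul_le_mul_of_nonneg_right h1 (le_of_lt hεpos)
    nlinarith
  have hEinj : ∀ i j, E i = E j → i = j := by
    intro i j h
    apply he_inj
    have : (e i : ℝ) = e j := mul_right_cancel₀ (ne_of_gt hεpos) h
    exact_mod_cast this
  have hEmono : ∀ i j, e i ≤ e j → E i ≤ E j := by
    intro i j h
    exact mul_le_mul_of_nonneg_right (Nat.cast_le.mpr h) (le_of_lt hεpos)
  refine ⟨fun i => (L i : ℝ) + E i, fun i => (H i : ℝ) + 1/2 + E i, ?_, ?_, ?_, ?_, ?_, ?_⟩
  · -- ℓ injective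
    intro i j hij
    simp only at hij
    have hLij : L i = L j := by
      rcases lt_trichotomy (L i) (L j) with h1 | h1 | h1
      · have : (L i : ℝ) + 1 ≤ L j := by exact_mod_cast Nat.succ_le_of_lt h1
        have := hE4 i; have := hE0 j; linarith
      · exact h1
      · have : (L j : ℝ) + 1 ≤ L i := by exact_mod_cast Nat.succ_le_of_lt h1
        have := hE4 j; have := hE0 i; linarith
    apply hEinj
    have : (L i : ℝ) = L j := by exact_mod_cast hLij
    linarith
  · -- h injective
    intro i j hij
    simp only at hij
    have hHij : H i = H j := by
      rcases lt_trichotomy (H i) (H j) with h1 | h1 | h1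
      · have : (H i : ℝ) + 1 ≤ H j := by exact_mod_cast Nat.succ_le_of_lt h1
        have := hE4 i; have := hE0 j; linarith
      · exact h1
      · have : (H j : ℝ) + 1 ≤ H i := by exact_mod_cast Nat.succ_le_of_lt h1
        have := hE4 j; have := hE0 i; linarith
    apply hEinj
    have : (H i : ℝ) = H j := by exact_mod_cast hHij
    linarith
  · -- disjoint ranges
    rw [Set.disjoint_left]
    rintro x ⟨i, rfl⟩ ⟨j, hj⟩
    simp only at hj
    rcases le_or_gt (L i) (H j) with h1 | h1
    · have : (L i : ℝ) ≤ H j := by exact_mod_cast h1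
      have := hE4 i; have := hE0 j; linarith
    · have : (H j : ℝ) + 1 ≤ L i := by exact_mod_cast Nat.succ_le_of_lt h1
      have := hE4 j; have := hE0 i; linarith
  · -- ℓ ≤ h
    intro i
    have : (L i : ℝ) ≤ H i := by exact_mod_cast hLHi i
    simp only
    linarith
  · -- R iff
    intro i j
    constructor
    · intro hij
      have : (H i : ℝ) + 1 ≤ L j := by exact_mod_cast Nat.succ_le_of_lt (hfwd i j hij)
      have := hE4 i; have := hE0 j
      simp only
      linarith
    · intro hlt
      by_contra hR
      have : (L j : ℝ) ≤ H i := by exact_mod_cast hLH i j hR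
      have := hE4 j; have := hE0 i
      simp only at hlt
      linarith
  · -- monotonicity
    intro i j hlt
    simp only at hlt ⊢
    have hLij : L i ≤ L j := by
      by_contra h'
      push_neg at h'
      have : (L j : ℝ) + 1 ≤ L i := by exact_mod_cast Nat.succ_le_of_lt h'
      have := hE4 j; have := hE0 i; linarith
    rcases eq_or_lt_of_le hLij with h1 | h1
    · -- L i = L j : compare via E
      have hEij : E i < E j := by
        have : (L i : ℝ) = L j := by exact_mod_cast h1
        linarith
      have heij : e i < e j := by
        have : (e i : ℝ) * ε < (e j : ℝ) * ε := hEij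
        have := lt_of_mul_lt_mul_right this (le_of_lt hεpos)
        exact_mod_cast this
      have hk : key i < key j := he_lt i j heij
      have hHij : H i ≤ H j := by
        by_contra h'
        push_neg at h'
        have := hkey2 j i h1.symm h'
        omega
      have : (H i : ℝ) ≤ H j := by exact_mod_cast hHij
      linarith [le_of_lt hEij]
    · -- L i < L j
      have hHij : (H i : ℝ) ≤ H j := by exact_mod_cast hHmono i j h1
      have heij : e i < e j := he_mono i j (hkey1 i j h1)
      have := hEmono i j (le_of_lt heij)
      linarith
end

section
/- Let S be a finite set with |S| = n. In the network D_LO^S, let F(D_LO^S) ⊆ ℝ^A be the convex hull of the characteristic vectors χ^{A(P)} of the arc sets A(P) of all source–sink paths P, and let P_LO^S ⊆ ℝ^{S⋆S} be the convex hull of the characteristic vectors x^R of all strict linear orders R on S. Let π : ℝ^A → ℝ^{S⋆S} be the linear map with π(Φ)_{(i,j)} = Σ { Φ_a : a = (X,Z) ∈ A, i ∈ X and j ∈ Z \ X }. Then π maps F(D_LO^S) onto P_LO^S, i.e., π(F(D_LO^S)) = P_LO^S. -/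
open scoped Classical

/-- Arcs of the network `D_LO^S`: pairs `(X, Z)` of subsets of `S` with `X ⊂ Z` and
`|Z| = |X| + 1`. -/
def LOArc (S : Type*) [Fintype S] [DecidableEq S] :=
  {a : Finset S × Finset S // a.1 ⊂ a.2 ∧ a.2.card = a.1.card + 1}

noncomputable instance (S : Type*) [Fintype S] [DecidableEq S] : Fintype (LOArc S) := by
  unfold LOArc; infer_instance

/-- The characteristic vectors `χ^{A(P)}` of the arc sets of all source–sink paths `P`
in the network `D_LO^S` (from source `∅` to sink `S`). -/
noncomputable def loPathVectors (S : Type*) [Fintype S] [DecidableEq S] :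
    Set (LOArc S → ℝ) :=
  {Φ | ∃ (m : ℕ) (X : Fin (m + 1) → Finset S),
    X 0 = ∅ ∧ X (Fin.last m) = Finset.univ ∧
    (∀ k : Fin m, X k.castSucc ⊂ X k.succ ∧
      (X k.succ).card = (X k.castSucc).card + 1) ∧
    Φ = fun a => if ∃ k : Fin m, (X k.castSucc, X k.succ) = a.val then 1 else 0}

/-- The projection `π : ℝ^A → ℝ^{S⋆S}`, with
`π(Φ)_{(i,j)} = Σ { Φ_a : a = (X,Z) ∈ A, i ∈ X and j ∈ Z \ X }`. -/
noncomputable def loProj (S : Type*) [Fintype S] [DecidableEq S] (Φ : LOArc S → ℝ) :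
    {p : S × S // p.1 ≠ p.2} → ℝ :=
  fun p => ∑ a : LOArc S,
    if p.val.1 ∈ a.val.1 ∧ p.val.2 ∈ a.val.2 ∧ p.val.2 ∉ a.val.1 then Φ a else 0

section Aux
variable {S : Type*} [Fintype S] [DecidableEq S]

lemma loPath_mem_iff {m : ℕ} {X : Fin (m + 1) → Finset S} (g : Fin m → S)
    (hX0 : X 0 = ∅)
    (hins : ∀ k : Fin m, X k.succ = insert (g k) (X k.castSucc)) :
    ∀ (j : Fin (m + 1)) (s : S), s ∈ X j ↔ ∃ l : Fin m, (l : ℕ) < (j : ℕ) ∧ g l = s := by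
  intro j
  induction j using Fin.induction with
  | zero => intro s; simp [hX0]
  | succ k ih =>
    intro s
    rw [hins k, Finset.mem_insert]
    constructor
    · rintro (rfl | hs)
      · exact ⟨k, by simp, rfl⟩
      · obtain ⟨l, hl, rfl⟩ := (ih s).1 hs
        exact ⟨l, by simp at hl ⊢; omega, rfl⟩
    · rintro ⟨l, hl, rfl⟩
      simp only [Fin.val_succ] at hl
      rcases Nat.lt_succ_iff_lt_or_eq.1 hl with h | h
      · exact Or.inr ((ih (g l)).2 ⟨l, by simpa using h, rfl⟩)
      · left; congr 1; exact Fin.ext h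

lemma loProj_path {m : ℕ} (X : Fin (m + 1) → Finset S) (e : Fin m ≃ S)
    (hX0 : X 0 = ∅)
    (hstep : ∀ k : Fin m, X k.castSucc ⊂ X k.succ ∧
      (X k.succ).card = (X k.castSucc).card + 1)
    (hins : ∀ k : Fin m, X k.succ = insert (e k) (X k.castSucc)) :
    loProj S (fun a => if ∃ k : Fin m, (X k.castSucc, X k.succ) = a.val then 1 else 0)
      = fun p => if (e.symm p.val.1 : ℕ) < (e.symm p.val.2 : ℕ) then 1 else 0 := by
  have hmem := loPath_mem_iff (fun k => e k) hX0 hins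
  funext p
  obtain ⟨⟨i, j⟩, hij⟩ := p
  simp only at *
  set k₀ : Fin m := e.symm j with hk₀
  have hek₀ : e k₀ = j := e.apply_symm_apply j
  set a₀ : LOArc S := ⟨(X k₀.castSucc, X k₀.succ), hstep k₀⟩ with ha₀
  have key : ∀ a : LOArc S,
      ((i ∈ a.val.1 ∧ j ∈ a.val.2 ∧ j ∉ a.val.1) ∧
        (∃ k : Fin m, (X k.castSucc, X k.succ) = a.val)) ↔
      (((e.symm i : ℕ) < (e.symm j : ℕ)) ∧ a = a₀) := by
    intro a
    constructor
    · rintro ⟨⟨hi, hj, hjn⟩, k, hk⟩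
      have h1 : a.val.1 = X k.castSucc := by rw [← hk]
      have h2 : a.val.2 = X k.succ := by rw [← hk]
      rw [h1] at hi hjn
      rw [h2] at hj
      obtain ⟨l, hl, hel⟩ := (hmem k.succ j).1 hj
      have hlk : l = k := by
        refine Fin.ext ?_
        simp only [Fin.val_succ] at hl
        rcases Nat.lt_succ_iff_lt_or_eq.1 hl with h | h
        · exact absurd ((hmem k.castSucc j).2 ⟨l, by simpa using h, hel⟩) hjn
        · exact h
      subst hlk
      have hkk : k₀ = l := by rw [hk₀, ← hel, e.symm_apply_apply]
      rw [← hkk] at hi hj hjn hk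
      obtain ⟨l', hl', hel'⟩ := (hmem k₀.castSucc i).1 hi
      constructor
      · rw [← hel', e.symm_apply_apply]
        simpa [← hek₀] using hl'
      · apply Subtype.ext
        rw [← hk]
    · rintro ⟨hlt, rfl⟩
      refine ⟨⟨?_, ?_, ?_⟩, ⟨k₀, rfl⟩⟩
      · exact (hmem k₀.castSucc i).2 ⟨e.symm i, by simpa using hlt, e.apply_symm_apply i⟩
      · exact (hmem k₀.succ j).2 ⟨k₀, by simp, hek₀⟩
      · intro h
        obtain ⟨l, hl, hel⟩ := (hmem k₀.castSucc j).1 h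
        have hlk : k₀ = l := by rw [hk₀, ← hel, e.symm_apply_apply]
        rw [← hlk] at hl
        simp at hl
  by_cases hlt : (e.symm i : ℕ) < (e.symm j : ℕ)
  · rw [if_pos hlt, loProj]
    rw [Finset.sum_eq_single a₀]
    · rw [if_pos, if_pos]
      · exact ⟨k₀, rfl⟩
      · exact ((key a₀).2 ⟨hlt, rfl⟩).1
    · intro a _ hne
      split_ifs with h1 h2
      · exact absurd ((key a).1 ⟨h1, h2⟩).2 hne
      · rfl
      · rfl
    · intro h; exact absurd (Finset.mem_univ a₀) h
  · rw [if_neg hlt, loProj]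
    apply Finset.sum_eq_zero
    intro a _
    split_ifs with h1 h2
    · exact absurd ((key a).1 ⟨h1, h2⟩).1 hlt
    · rfl
    · rfl

lemma loProj_image_paths :
    loProj S '' loPathVectors S =
      {x : {p : S × S // p.1 ≠ p.2} → ℝ |
        ∃ R : S → S → Prop,
          ((∀ i, ¬ R i i) ∧ (∀ i j k, R i j → R j k → R i k) ∧
            (∀ i j, i ≠ j → R i j ∨ R j i)) ∧
          x = fun p => if R p.val.1 p.val.2 then 1 else 0} := by
  ext x
  constructor
  · rintro ⟨Φ, ⟨m, X, hX0, hXl, hstep, rfl⟩, rfl⟩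
    -- extract the new element at each step
    have hcard : ∀ k : Fin m, (X k.succ \ X k.castSucc).card = 1 := by
      intro k
      rw [Finset.card_sdiff_of_subset (hstep k).1.subset, (hstep k).2]
      omega
    choose g hg using fun k => Finset.card_eq_one.mp (hcard k)
    have hgmem : ∀ k, g k ∈ X k.succ ∧ g k ∉ X k.castSucc := by
      intro k
      have : g k ∈ X k.succ \ X k.castSucc := by rw [hg k]; exact Finset.mem_singleton_self _
      exact ⟨(Finset.mem_sdiff.1 this).1, (Finset.mem_sdiff.1 this).2⟩
    have hins : ∀ k : Fin m, X k.succ = insert (g k) (X k.castSucc) := by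
      intro k
      ext s
      rw [Finset.mem_insert]
      constructor
      · intro hs
        by_cases h : s ∈ X k.castSucc
        · exact Or.inr h
        · left
          have : s ∈ X k.succ \ X k.castSucc := Finset.mem_sdiff.2 ⟨hs, h⟩
          rw [hg k] at this
          exact Finset.mem_singleton.1 this
      · rintro (rfl | hs)
        · exact (hgmem k).1
        · exact (hstep k).1.subset hs
    have hmem := loPath_mem_iff g hX0 hins
    have hginj : Function.Injective g := by
      intro a b hab
      by_contra hne
      rcases Ne.lt_or_gt (fun h : (a:ℕ) = (b:ℕ) => hne (Fin.ext h)) with h | h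
      · exact (hgmem b).2 ((hmem b.castSucc (g b)).2 ⟨a, by simpa using h, hab⟩)
      · exact (hgmem a).2 ((hmem a.castSucc (g a)).2 ⟨b, by simpa using h, hab.symm⟩)
    have hgsurj : Function.Surjective g := by
      intro s
      have : s ∈ X (Fin.last m) := by rw [hXl]; exact Finset.mem_univ s
      obtain ⟨l, _, hl⟩ := (hmem (Fin.last m) s).1 this
      exact ⟨l, hl⟩
    set e : Fin m ≃ S := Equiv.ofBijective g ⟨hginj, hgsurj⟩ with he
    have hins' : ∀ k : Fin m, X k.succ = insert (e k) (X k.castSucc) := hins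
    rw [loProj_path X e hX0 hstep hins']
    refine ⟨fun i j => (e.symm i : ℕ) < (e.symm j : ℕ), ⟨?_, ?_, ?_⟩, ?_⟩
    · intro i; exact lt_irrefl _
    · intro i j k; exact lt_trans
    · intro i j hij
      have : e.symm i ≠ e.symm j := fun h => hij (e.symm.injective h)
      rcases Ne.lt_or_gt (fun h : ((e.symm i : ℕ)) = (e.symm j : ℕ) => this (Fin.ext h)) with h | h
      · exact Or.inl h
      · exact Or.inr h
    · funext p
      by_cases h : (e.symm p.val.1 : ℕ) < (e.symm p.val.2 : ℕ) <;> simp [h]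
  · rintro ⟨R, ⟨hirr, htrans, htot⟩, rfl⟩
    letI : LinearOrder S :=
      { le := fun a b => R a b ∨ a = b
        le_refl := fun a => Or.inr rfl
        le_trans := by
          rintro a b c (hab | rfl) (hbc | rfl)
          · exact Or.inl (htrans _ _ _ hab hbc)
          · exact Or.inl hab
          · exact Or.inl hbc
          · exact Or.inr rfl
        le_antisymm := by
          rintro a b (hab | rfl) (hba | h)
          · exact absurd (htrans _ _ _ hab hba) (hirr a)
          · exact h.symm
          · rfl
          · rfl
        le_total := by
          intro a b
          by_cases h : a = b
          · exact Or.inl (Or.inr h)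
          · rcases htot a b h with h' | h'
            · exact Or.inl (Or.inl h')
            · exact Or.inr (Or.inl h')
        toDecidableLE := fun _ _ => Classical.propDecidable _ }
    have hRlt : ∀ a b : S, a < b ↔ R a b := by
      intro a b
      rw [lt_iff_le_not_ge]
      constructor
      · rintro ⟨hab | rfl, hn⟩
        · exact hab
        · exact absurd (Or.inr rfl) hn
      · intro h
        refine ⟨Or.inl h, ?_⟩
        rintro (h' | rfl)
        · exact hirr _ (htrans _ _ _ h h')
        · exact hirr _ h
    set n := Fintype.card S with hn
    set e₀ : Fin n ≃o S := monoEquivOfFin S rfl with he₀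
    set X : Fin (n + 1) → Finset S :=
      fun k => Finset.univ.filter fun s => (e₀.symm s : ℕ) < (k : ℕ) with hX
    have hX0 : X 0 = ∅ := by
      ext s; simp [hX]
    have hXl : X (Fin.last n) = Finset.univ := by
      ext s; simp [hX, (e₀.symm s).isLt]
    have hins : ∀ k : Fin n, X k.succ = insert ((e₀ : Fin n ≃ S) k) (X k.castSucc) := by
      intro k
      ext s
      simp only [hX, Finset.mem_filter, Finset.mem_univ, true_and, Finset.mem_insert,
        Fin.val_succ, Fin.coe_castSucc]
      constructor
      · intro h
        rcases Nat.lt_succ_iff_lt_or_eq.1 h with h | h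
        · exact Or.inr h
        · left
          have : e₀.symm s = k := Fin.ext h
          rw [← this]; exact (e₀.apply_symm_apply s).symm
      · rintro (rfl | h)
        · simp
        · omega
    have hnot : ∀ k : Fin n, (e₀ : Fin n ≃ S) k ∉ X k.castSucc := by
      intro k h
      simp only [hX, Finset.mem_filter, Finset.mem_univ, true_and, Fin.coe_castSucc] at h
      have hk : (e₀ : Fin n ≃ S) k = e₀ k := rfl
      rw [hk, e₀.symm_apply_apply] at h
      omega
    have hstep : ∀ k : Fin n, X k.castSucc ⊂ X k.succ ∧
        (X k.succ).card = (X k.castSucc).card + 1 := by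
      intro k
      rw [hins k]
      exact ⟨Finset.ssubset_insert (hnot k), Finset.card_insert_of_notMem (hnot k)⟩
    refine ⟨fun a => if ∃ k : Fin n, (X k.castSucc, X k.succ) = a.val then 1 else 0,
      ⟨n, X, hX0, hXl, hstep, rfl⟩, ?_⟩
    rw [loProj_path X (e₀ : Fin n ≃ S) hX0 hstep hins]
    funext p
    have hcoe : ∀ s : S, (e₀ : Fin n ≃ S).symm s = e₀.symm s := fun s => rfl
    have key : (((e₀ : Fin n ≃ S).symm p.val.1 : Fin n) : ℕ) <
        (((e₀ : Fin n ≃ S).symm p.val.2 : Fin n) : ℕ) ↔ R p.val.1 p.val.2 := by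
      rw [hcoe, hcoe, ← hRlt]
      rw [show ((e₀.symm p.val.1 : Fin n) : ℕ) < ((e₀.symm p.val.2 : Fin n) : ℕ) ↔
        (e₀.symm p.val.1 : Fin n) < e₀.symm p.val.2 from Iff.symm Fin.lt_iff_val_lt_val]
      exact (OrderIso.symm e₀).lt_iff_lt
    by_cases h : R p.val.1 p.val.2
    · rw [if_pos h, if_pos (key.2 h)]
    · rw [if_neg h, if_neg (fun hc => h (key.1 hc))]

end Aux

/-- The projection `π` maps the flow polytope `F(D_LO^S)` (the convex hull of the
characteristic vectors of arc sets of source–sink paths) onto the linear order polytope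
`P_LO^S` (the convex hull of the characteristic vectors of all strict linear orders). -/
theorem loProj_image_flowPolytope (S : Type*) [Fintype S] [DecidableEq S] :
    loProj S '' convexHull ℝ (loPathVectors S) =
      convexHull ℝ
        {x : {p : S × S // p.1 ≠ p.2} → ℝ |
          ∃ R : S → S → Prop,
            ((∀ i, ¬ R i i) ∧ (∀ i j k, R i j → R j k → R i k) ∧
              (∀ i j, i ≠ j → R i j ∨ R j i)) ∧
            x = fun p => if R p.val.1 p.val.2 then 1 else 0} := by
  have hlin : IsLinearMap ℝ (loProj S) := by
    constructor
    · intro Φ Ψ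
      funext p
      simp only [loProj, Pi.add_apply]
      rw [← Finset.sum_add_distrib]
      refine Finset.sum_congr rfl fun a _ => ?_
      split <;> simp
    · intro c Φ
      funext p
      simp only [loProj, Pi.smul_apply, smul_eq_mul]
      rw [Finset.mul_sum]
      refine Finset.sum_congr rfl fun a _ => ?_
      split <;> simp
  rw [hlin.image_convexHull, loProj_image_paths]
end

section
/- For a finite set S with |S| = n, the number of pairs ((X,Y),(Z,T)) where Y ⊆ X ⊆ S, T ⊆ Z ⊆ S, X ⊆ Z, Y ⊆ T, and either (|Z| = |X| + 1 and |T| = |Y|) or (|Z| = |X| and |T| = |Y| + 1), equals 2 · n · 3^{n−1}. -/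
open Finset

section Aux
variable {S : Type*} [DecidableEq S] [Fintype S]

def part (s : S) (f : {x : S // x ≠ s} → Fin 3) (i : Fin 3) : Finset S :=
  (Finset.univ.filter fun x => f x = i).map (Function.Embedding.subtype _)

lemma mem_part {s : S} {f : {x : S // x ≠ s} → Fin 3} {i : Fin 3} {x : S} :
    x ∈ part s f i ↔ ∃ h : x ≠ s, f ⟨x, h⟩ = i := by
  simp [part]

lemma not_mem_part_self {s : S} {f : {x : S // x ≠ s} → Fin 3} {i : Fin 3} :
    s ∉ part s f i := by simp [mem_part]

def decode : Bool × (Σ s : S, ({x : S // x ≠ s} → Fin 3)) →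
    (Finset S × Finset S) × (Finset S × Finset S) := fun p =>
  let s := p.2.1
  let f := p.2.2
  let Y := part s f 0
  let X := Y ∪ part s f 1
  if p.1 then ((insert s X, Y), (insert s X, insert s Y))
  else ((X, Y), (insert s X, Y))

def ArcP (a : (Finset S × Finset S) × (Finset S × Finset S)) : Prop :=
  a.1.2 ⊆ a.1.1 ∧ a.2.2 ⊆ a.2.1 ∧ a.1.1 ⊆ a.2.1 ∧ a.1.2 ⊆ a.2.2 ∧
    ((a.2.1.card = a.1.1.card + 1 ∧ a.2.2.card = a.1.2.card) ∨
      (a.2.1.card = a.1.1.card ∧ a.2.2.card = a.1.2.card + 1))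

lemma decode_mem (p : Bool × (Σ s : S, ({x : S // x ≠ s} → Fin 3))) : ArcP (decode p) := by
  obtain ⟨b, s, f⟩ := p
  have hsY : s ∉ part s f 0 := not_mem_part_self
  have hsX : s ∉ part s f 0 ∪ part s f 1 := by
    simp [not_mem_part_self]
  have hYX : part s f 0 ⊆ part s f 0 ∪ part s f 1 := subset_union_left
  cases b with
  | false =>
    refine ⟨hYX, ?_, subset_insert _ _, subset_refl _, Or.inl ⟨?_, rfl⟩⟩
    · simp only [decode]
      exact hYX.trans (subset_insert _ _)
    · exact card_insert_of_notMem hsX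
  | true =>
    refine ⟨?_, ?_, subset_refl _, subset_insert _ _, Or.inr ⟨rfl, ?_⟩⟩
    · exact hYX.trans (subset_insert _ _)
    · exact insert_subset_insert _ hYX
    · simp only [decode]
      exact card_insert_of_notMem hsY


lemma part_disjoint {s : S} {f : {x : S // x ≠ s} → Fin 3} {i j : Fin 3} (hij : i ≠ j)
    {x : S} (hx : x ∈ part s f i) : x ∉ part s f j := by
  rw [mem_part] at hx ⊢
  obtain ⟨h, hfi⟩ := hx
  rintro ⟨h', hfj⟩
  exact hij (hfi.symm.trans hfj)

lemma mem_part_iff {s : S} (g : {x : S // x ≠ s} → Fin 3) (i : Fin 3)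
    (x : {x : S // x ≠ s}) : ((x : S) ∈ part s g i) ↔ g x = i := by
  rw [mem_part]
  exact ⟨fun ⟨h, hi⟩ => hi, fun hi => ⟨x.2, hi⟩⟩

lemma funext_of_parts {s : S} {f f' : {x : S // x ≠ s} → Fin 3}
    (h0 : part s f 0 = part s f' 0) (h1 : part s f 1 = part s f' 1) : f = f' := by
  funext x
  have e0 : f x = 0 ↔ f' x = 0 := by rw [← mem_part_iff f 0 x, ← mem_part_iff f' 0 x, h0]
  have e1 : f x = 1 ↔ f' x = 1 := by rw [← mem_part_iff f 1 x, ← mem_part_iff f' 1 x, h1]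
  have key : ∀ a b : Fin 3, (a = 0 ↔ b = 0) → (a = 1 ↔ b = 1) → a = b := by decide
  exact key _ _ e0 e1

lemma union_cancel {s : S} {f f' : {x : S // x ≠ s} → Fin 3}
    (h0 : part s f 0 = part s f' 0)
    (h : part s f 0 ∪ part s f 1 = part s f' 0 ∪ part s f' 1) :
    part s f 1 = part s f' 1 := by
  ext x
  have d : ∀ g : {x : S // x ≠ s} → Fin 3, x ∈ part s g 1 ↔
      (x ∈ part s g 0 ∪ part s g 1 ∧ x ∉ part s g 0) := by
    intro g
    constructor
    · intro hx1
      exact ⟨mem_union_right _ hx1, part_disjoint (by decide) hx1⟩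
    · rintro ⟨h1, hn⟩
      rcases mem_union.mp h1 with h2 | h2
      · exact absurd h2 hn
      · exact h2
  rw [d f, d f', h, h0]

lemma decode_injective : Function.Injective (decode (S := S)) := by
  rintro ⟨b, s, f⟩ ⟨b', s', f'⟩ h
  simp only [decode, Prod.mk.injEq] at h
  -- first: b = b'
  have hbb : b = b' := by
    cases b <;> cases b' <;> simp_all
    · -- false, true : Y = Y' and Y = insert s' Y'
      obtain ⟨⟨_, hY⟩, _, hT⟩ := h
      have : s' ∈ part s f 0 := by rw [hT]; exact mem_insert_self _ _
      rw [hY] at this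
      exact absurd this not_mem_part_self
    · obtain ⟨⟨_, hY⟩, _, hT⟩ := h
      have : s ∈ part s' f' 0 := by rw [← hT]; exact mem_insert_self _ _
      rw [← hY] at this
      exact absurd this not_mem_part_self
  subst hbb
  have hsX : s ∉ part s f 0 ∪ part s f 1 := by simp [not_mem_part_self]
  have hsX' : s' ∉ part s' f' 0 ∪ part s' f' 1 := by simp [not_mem_part_self]
  cases b <;> simp only [Bool.false_eq_true, if_false, if_true, Prod.mk.injEq] at h
  case false =>
    -- false case: h : X = X' ∧ Y = Y' ∧ Z = Z' ∧ Y = Y'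
    obtain ⟨⟨hX, hY⟩, hZ, _⟩ := h
    have hss : s = s' := by
      have hm : s ∈ insert s' (part s' f' 0 ∪ part s' f' 1) := by
        rw [← hZ]; exact mem_insert_self _ _
      rw [mem_insert] at hm
      rcases hm with h1 | h1
      · exact h1
      · rw [← hX] at h1; exact absurd h1 hsX
    subst hss
    exact congrArg (fun g => (false, Sigma.mk s g)) (funext_of_parts hY (union_cancel hY hX))
  case true =>
    -- true case: h : Z = Z' ∧ Y = Y' ∧ Z = Z' ∧ T = T'
    obtain ⟨⟨hX, hY⟩, _, hT⟩ := h
    have hss : s = s' := by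
      have hm : s ∈ insert s' (part s' f' 0) := by
        rw [← hT]; exact mem_insert_self _ _
      rw [mem_insert] at hm
      rcases hm with h1 | h1
      · exact h1
      · rw [← hY] at h1; exact absurd h1 not_mem_part_self
    subst hss
    have hX' : part s f 0 ∪ part s f 1 = part s f' 0 ∪ part s f' 1 := by
      have h2 := congrArg (fun t => Finset.erase t s) hX
      simpa [Finset.erase_insert_eq_erase, Finset.erase_eq_of_notMem hsX,
        Finset.erase_eq_of_notMem hsX'] using h2
    exact congrArg (fun g => (true, Sigma.mk s g)) (funext_of_parts hY (union_cancel hY hX'))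

lemma part_zero_eq {Y X : Finset S} (hYX : Y ⊆ X) {s : S} (hsY : s ∉ Y) :
    part s (fun x : {x : S // x ≠ s} =>
      if (x : S) ∈ Y then 0 else if (x : S) ∈ X then 1 else 2) 0 = Y := by
  ext x
  rw [mem_part]
  constructor
  · rintro ⟨h, hf⟩
    by_contra hx
    simp only [hx, if_false] at hf
    split_ifs at hf <;> exact absurd hf (by decide)
  · intro hx
    exact ⟨fun he => hsY (he ▸ hx), by simp [hx]⟩

lemma part_one_eq {Y X : Finset S} (hYX : Y ⊆ X) {s : S} :
    part s (fun x : {x : S // x ≠ s} =>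
      if (x : S) ∈ Y then 0 else if (x : S) ∈ X then 1 else 2) 1 = (X \ Y).erase s := by
  ext x
  rw [mem_part, mem_erase, mem_sdiff]
  constructor
  · rintro ⟨h, hf⟩
    by_cases hy : x ∈ Y
    · simp only [hy, if_true] at hf
      exact absurd hf (by decide)
    · by_cases hx : x ∈ X
      · exact ⟨h, hx, hy⟩
      · simp only [hy, hx, if_false] at hf
        exact absurd hf (by decide)
  · rintro ⟨h, hx, hy⟩
    exact ⟨h, by simp [hx, hy]⟩

lemma decode_surj (a : (Finset S × Finset S) × (Finset S × Finset S)) (ha : ArcP a) :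
    ∃ p, decode p = a := by
  obtain ⟨⟨X, Y⟩, Z, T⟩ := a
  obtain ⟨hYX, hTZ, hXZ, hYT, hcard⟩ := ha
  simp only at hYX hTZ hXZ hYT hcard
  rcases hcard with ⟨hZc, hTc⟩ | ⟨hZc, hTc⟩
  · -- type 1 : T = Y, Z = insert s X
    have hTY : Y = T := Finset.eq_of_subset_of_card_le hYT hTc.le
    have hd : (Z \ X).card = 1 := by rw [card_sdiff_of_subset hXZ, hZc]; omega
    obtain ⟨s, hs⟩ := Finset.card_eq_one.mp hd
    have hsX : s ∉ X := by
      have : s ∈ Z \ X := hs ▸ mem_singleton_self s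
      exact (mem_sdiff.mp this).2
    have hsY : s ∉ Y := fun h => hsX (hYX h)
    have hZeq : Z = insert s X := by
      rw [← Finset.union_sdiff_of_subset hXZ, hs, union_comm]
      rw [Finset.insert_eq]
    refine ⟨(false, ⟨s, fun x => if (x : S) ∈ Y then 0 else if (x : S) ∈ X then 1 else 2⟩), ?_⟩
    simp only [decode, Bool.false_eq_true, if_false]
    rw [part_zero_eq hYX hsY, part_one_eq hYX,
      Finset.erase_eq_of_notMem (fun h => hsX (mem_sdiff.mp h).1),
      Finset.union_sdiff_of_subset hYX, ← hZeq, hTY]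
  · -- type 2 : Z = X, T = insert s Y
    have hXZe : X = Z := Finset.eq_of_subset_of_card_le hXZ hZc.le
    have hd : (T \ Y).card = 1 := by rw [card_sdiff_of_subset hYT, hTc]; omega
    obtain ⟨s, hs⟩ := Finset.card_eq_one.mp hd
    have hsT : s ∈ T := (mem_sdiff.mp (hs ▸ mem_singleton_self s)).1
    have hsY : s ∉ Y := (mem_sdiff.mp (hs ▸ mem_singleton_self s)).2
    have hsX : s ∈ X := hXZe ▸ hTZ hsT
    have hTeq : T = insert s Y := by
      rw [← Finset.union_sdiff_of_subset hYT, hs, union_comm]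
      rw [Finset.insert_eq]
    refine ⟨(true, ⟨s, fun x => if (x : S) ∈ Y then 0 else if (x : S) ∈ X then 1 else 2⟩), ?_⟩
    simp only [decode, if_true]
    rw [part_zero_eq hYX hsY, part_one_eq hYX]
    have hU : Y ∪ (X \ Y).erase s = X.erase s := by
      ext y
      simp only [mem_union, mem_erase, mem_sdiff]
      constructor
      · rintro (hy | ⟨hne, hyX, _⟩)
        · exact ⟨fun he => hsY (he ▸ hy), hYX hy⟩
        · exact ⟨hne, hyX⟩
      · rintro ⟨hne, hyX⟩
        by_cases hy : y ∈ Y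
        · exact Or.inl hy
        · exact Or.inr ⟨hne, hyX, hy⟩
    rw [hU, Finset.insert_erase hsX, ← hTeq, hXZe]

end Aux

/-- For a finite set `S` with `|S| = n`, the number of pairs `((X,Y),(Z,T))` with
`Y ⊆ X ⊆ S`, `T ⊆ Z ⊆ S`, `X ⊆ Z`, `Y ⊆ T`, and either (`|Z| = |X| + 1` and `|T| = |Y|`)
or (`|Z| = |X|` and `|T| = |Y| + 1`) — the arcs of the network `D_IO^S` — equals
`2 · n · 3^(n-1)`. -/
theorem card_arcs_DIO {S : Type*} [Fintype S] (n : ℕ) (hn : Fintype.card S = n) :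
    Nat.card {a : (Finset S × Finset S) × (Finset S × Finset S) //
        a.1.2 ⊆ a.1.1 ∧ a.2.2 ⊆ a.2.1 ∧ a.1.1 ⊆ a.2.1 ∧ a.1.2 ⊆ a.2.2 ∧
        ((a.2.1.card = a.1.1.card + 1 ∧ a.2.2.card = a.1.2.card) ∨
          (a.2.1.card = a.1.1.card ∧ a.2.2.card = a.1.2.card + 1))} =
      2 * n * 3 ^ (n - 1) := by
  classical
  have hb : Function.Bijective (fun p : Bool × (Σ s : S, ({x : S // x ≠ s} → Fin 3)) =>
      (⟨decode p, decode_mem p⟩ : {a // ArcP a})) := by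
    constructor
    · intro p q h
      exact decode_injective (congrArg Subtype.val h)
    · rintro ⟨a, ha⟩
      obtain ⟨p, hp⟩ := decode_surj a ha
      exact ⟨p, Subtype.ext hp⟩
  have h1 : Nat.card {a : (Finset S × Finset S) × (Finset S × Finset S) // ArcP a} =
      Nat.card (Bool × Σ s : S, ({x : S // x ≠ s} → Fin 3)) :=
    (Nat.card_eq_of_bijective _ hb).symm
  have h2 : ∀ s : S, Fintype.card {x : S // x ≠ s} = n - 1 := by
    intro s
    simp only [ne_eq]
    rw [Fintype.card_subtype_compl, Fintype.card_subtype_eq, hn]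
  calc Nat.card {a : (Finset S × Finset S) × (Finset S × Finset S) // ArcP a}
      = Nat.card (Bool × Σ s : S, ({x : S // x ≠ s} → Fin 3)) := h1
    _ = 2 * n * 3 ^ (n - 1) := by
        rw [Nat.card_eq_fintype_card, Fintype.card_prod, Fintype.card_bool,
          Fintype.card_sigma]
        have : ∀ s : S, Fintype.card ({x : S // x ≠ s} → Fin 3) = 3 ^ (n - 1) := by
          intro s
          rw [Fintype.card_fun, Fintype.card_fin, h2 s]
        rw [Finset.sum_congr rfl fun s _ => this s, Finset.sum_const, Finset.card_univ, hn,
          smul_eq_mul]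
        ring
end

section
/- Let S be a finite set with |S| = n, and let N be the set of triples (X, Y, L) with Y ⊆ X ⊆ S and L a strict linear order on X \ Y. Then |N| = Σ_{t=0}^{n} n·(n−1)⋯(n−t+1) · 2^{n−t} (where the t = 0 term is 2ⁿ), and consequently n! ≤ |N| ≤ e² · n!. -/
/-- `L` is a strict linear order on the subset `T` of `S`: it only relates elements of
`T`, and is irreflexive, transitive and complete on `T`. -/
def IsStrictLinearOrderOn {S : Type*} (T : Finset S) (L : S → S → Prop) : Prop :=
  (∀ i j, L i j → i ∈ T ∧ j ∈ T) ∧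
  (∀ i, ¬ L i i) ∧
  (∀ i j k, L i j → L j k → L i k) ∧
  (∀ i ∈ T, ∀ j ∈ T, i ≠ j → L i j ∨ L j i)

/-- Nodes of the network `D_SO^S`: triples `(X, Y, L)` with `Y ⊆ X ⊆ S` and `L` a strict
linear order on `X \ Y`. -/
def SONode (S : Type*) [Fintype S] [DecidableEq S] :=
  {v : Finset S × Finset S × (S → S → Prop) //
    v.2.1 ⊆ v.1 ∧ IsStrictLinearOrderOn (v.1 \ v.2.1) v.2.2}

open Finset

private def ordOfEquiv {S : Type*} (T : Finset S) (f : ↥T ≃ Fin T.card) :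
    {L : S → S → Prop // IsStrictLinearOrderOn T L} :=
  ⟨fun i j => ∃ (hi : i ∈ T) (hj : j ∈ T), f ⟨i, hi⟩ < f ⟨j, hj⟩, by
    refine ⟨fun i j h => ⟨h.1, h.2.1⟩, ?_, ?_, ?_⟩
    · rintro i ⟨hi, hj, h⟩; exact lt_irrefl _ h
    · rintro i j l ⟨hi, hj, h1⟩ ⟨hj', hl, h2⟩; exact ⟨hi, hl, h1.trans h2⟩
    · intro i hi j hj hne
      rcases lt_or_gt_of_ne (a := f ⟨i, hi⟩) (b := f ⟨j, hj⟩)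
        (fun h => hne (by simpa using Subtype.ext_iff.mp (f.injective h))) with h | h
      · exact Or.inl ⟨hi, hj, h⟩
      · exact Or.inr ⟨hj, hi, h⟩⟩

private lemma ordOfEquiv_bij {S : Type*} (T : Finset S) :
    Function.Bijective (ordOfEquiv T) := by
  classical
  constructor
  · intro f f' h
    have hrel := congrArg Subtype.val h
    have key : ∀ a b : ↥T, f a < f b ↔ f' a < f' b := by
      intro a b
      have hiff := iff_of_eq (congrFun (congrFun hrel ↑a) ↑b)
      constructor
      · intro hab
        obtain ⟨hi, hj, h'⟩ := hiff.mp ⟨a.2, b.2, hab⟩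
        exact h'
      · intro hab
        obtain ⟨hi, hj, h'⟩ := hiff.mpr ⟨a.2, b.2, hab⟩
        exact h'
    let oi : Fin T.card ≃o Fin T.card :=
      { toEquiv := f.symm.trans f'
        map_rel_iff' := by
          intro x y
          simp only [Equiv.trans_apply]
          rw [← not_lt, ← not_lt, not_iff_not, ← key, f.apply_symm_apply, f.apply_symm_apply] }
    have hoi : oi = OrderIso.refl (Fin T.card) := Subsingleton.elim _ _
    apply Equiv.ext
    intro a
    have h2 : oi (f a) = f' a := by
      show f' (f.symm (f a)) = f' a
      rw [f.symm_apply_apply]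
    rw [hoi] at h2
    simpa using h2
  · rintro ⟨L, hsupp, hirr, htrans, htot⟩
    set r : ↥T → ↥T → Prop := fun a b => L ↑a ↑b with hr
    haveI : IsIrrefl ↥T r := ⟨fun a => hirr ↑a⟩
    haveI : IsTrans ↥T r := ⟨fun a b c => htrans ↑a ↑b ↑c⟩
    haveI : IsStrictOrder ↥T r := ⟨⟩
    haveI : IsTrichotomous ↥T r := ⟨by
      intro a b
      by_cases hab : a = b
      · exact fun _ _ => hab
      · rcases htot ↑a a.2 ↑b b.2 (fun h => hab (Subtype.ext h)) with h | h
        · exact fun h1 _ => absurd h h1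
        · exact fun _ h2 => absurd h h2⟩
    haveI : IsStrictTotalOrder ↥T r := ⟨⟩
    letI : LinearOrder ↥T := linearOrderOfSTO r
    have f : Fin T.card ≃o ↥T := monoEquivOfFin ↥T (by rw [Fintype.card_coe])
    refine ⟨f.toEquiv.symm, ?_⟩
    apply Subtype.ext
    show (fun i j => ∃ (hi : i ∈ T) (hj : j ∈ T), f.symm ⟨i, hi⟩ < f.symm ⟨j, hj⟩) = L
    funext i j
    apply propext
    constructor
    · rintro ⟨hi, hj, hlt⟩
      exact f.symm.lt_iff_lt.mp hlt
    · intro hL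
      exact ⟨(hsupp i j hL).1, (hsupp i j hL).2, f.symm.lt_iff_lt.mpr hL⟩

lemma card_ordersOn {S : Type*} [Fintype S] [DecidableEq S] (T : Finset S) :
    Nat.card {L : S → S → Prop // IsStrictLinearOrderOn T L} = (T.card).factorial := by
  classical
  rw [Nat.card_congr (Equiv.ofBijective _ (ordOfEquiv_bij T)).symm, Nat.card_eq_fintype_card,
    Fintype.card_equiv (Fintype.equivFinOfCardEq (by rw [Fintype.card_coe])), Fintype.card_coe]

private lemma union_sdiff_of_disjoint {S : Type*} [DecidableEq S] {T Y : Finset S}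
    (h : Disjoint T Y) : (T ∪ Y) \ Y = T := by
  rw [union_sdiff_right, sdiff_eq_self_of_disjoint h]

private def nodeOfSigma {S : Type*} [Fintype S] [DecidableEq S]
    (p : Σ P : {P : Finset S × Finset S // Disjoint P.1 P.2},
      {L : S → S → Prop // IsStrictLinearOrderOn P.1.1 L}) : SONode S :=
  ⟨(p.1.1.1 ∪ p.1.1.2, p.1.1.2, p.2.1), subset_union_right, by
    rw [union_sdiff_of_disjoint p.1.2]; exact p.2.2⟩

private lemma nodeOfSigma_bij {S : Type*} [Fintype S] [DecidableEq S] :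
    Function.Bijective (nodeOfSigma (S := S)) := by
  constructor
  · rintro ⟨⟨⟨T, Y⟩, hd⟩, ⟨L, hL⟩⟩ ⟨⟨⟨T', Y'⟩, hd'⟩, ⟨L', hL'⟩⟩ h
    have hv := congrArg Subtype.val h
    simp only [nodeOfSigma, Prod.ext_iff] at hv
    obtain ⟨hU, hY, hLe⟩ := hv
    subst hY; subst hLe
    have hT : T = T' := by
      rw [← union_sdiff_of_disjoint (show Disjoint T Y from hd), hU,
        union_sdiff_of_disjoint (show Disjoint T' Y from hd')]
    subst hT
    rfl
  · rintro ⟨⟨X, Y, L⟩, hsub, hord⟩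
    refine ⟨⟨⟨(X \ Y, Y), sdiff_disjoint⟩, ⟨L, hord⟩⟩, ?_⟩
    apply Subtype.ext
    show (X \ Y ∪ Y, Y, L) = (X, Y, L)
    rw [sdiff_union_of_subset hsub]

/-- The number of nodes of the network `D_SO^S` equals
`Σ_{t=0}^{n} n·(n−1)⋯(n−t+1) · 2^(n−t)` (where the `t = 0` term is `2^n`), and hence
lies between `n!` and `e² · n!`. -/
theorem card_nodes_DSO {S : Type*} [Fintype S] [DecidableEq S] (n : ℕ)
    (hn : Fintype.card S = n) :
    Nat.card (SONode S) =
        ∑ t ∈ Finset.range (n + 1), n.descFactorial t * 2 ^ (n - t) ∧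
      n.factorial ≤ Nat.card (SONode S) ∧
      (Nat.card (SONode S) : ℝ) ≤ Real.exp 2 * n.factorial := by
  classical
  have h1 : Nat.card (SONode S)
      = ∑ P : {P : Finset S × Finset S // Disjoint P.1 P.2}, (P.1.1.card).factorial := by
    rw [← Nat.card_congr (Equiv.ofBijective _ (nodeOfSigma_bij (S := S))),
      Nat.card_eq_fintype_card, Fintype.card_sigma]
    exact Finset.sum_congr rfl fun P _ => by
      rw [← Nat.card_eq_fintype_card, card_ordersOn]
  have h2 : ∑ P : {P : Finset S × Finset S // Disjoint P.1 P.2}, (P.1.1.card).factorial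
      = ∑ T : Finset S, (T.card).factorial * 2 ^ (n - T.card) := by
    rw [← Finset.sum_subtype (univ.filter (fun P : Finset S × Finset S => Disjoint P.1 P.2))
      (by simp) (fun P => (P.1.card).factorial)]
    rw [Finset.sum_filter, Fintype.sum_prod_type]
    refine Finset.sum_congr rfl fun T _ => ?_
    rw [← Finset.sum_filter]
    have hfil : univ.filter (fun Y : Finset S => Disjoint T Y) = Tᶜ.powerset := by
      ext Y
      simp only [mem_filter, mem_univ, true_and, mem_powerset]
      exact (le_compl_iff_disjoint_left).symm
    rw [hfil]
    dsimp only
    rw [Finset.sum_const, Finset.card_powerset, Finset.card_compl, hn, smul_eq_mul, mul_comm]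
  have h3 : ∑ T : Finset S, (T.card).factorial * 2 ^ (n - T.card)
      = ∑ t ∈ Finset.range (n + 1), n.descFactorial t * 2 ^ (n - t) := by
    rw [← Finset.powerset_univ,
      Finset.sum_powerset_apply_card (fun m => m.factorial * 2 ^ (n - m)), card_univ, hn]
    refine Finset.sum_congr rfl fun m _ => ?_
    rw [smul_eq_mul, Nat.descFactorial_eq_factorial_mul_choose, ← mul_assoc, mul_comm _ (m.factorial)]
  have hmain := h1.trans (h2.trans h3)
  refine ⟨hmain, ?_, ?_⟩
  · rw [hmain]
    calc n.factorial = n.descFactorial n * 2 ^ (n - n) := by simp [Nat.descFactorial_self]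
      _ ≤ _ := Finset.single_le_sum (f := fun t => n.descFactorial t * 2 ^ (n - t))
          (fun i _ => Nat.zero_le _) (Finset.self_mem_range_succ n)
  · rw [hmain]
    push_cast
    have key : ∀ t ∈ Finset.range (n + 1),
        ((n.descFactorial t : ℝ)) * 2 ^ (n - t)
          = (n.factorial : ℝ) * ((2 : ℝ) ^ (n - t) / ((n - t).factorial)) := by
      intro t ht
      have hle : t ≤ n := Nat.lt_succ_iff.mp (Finset.mem_range.mp ht)
      have hfd := Nat.factorial_mul_descFactorial hle
      have hne : ((n - t).factorial : ℝ) ≠ 0 := by positivity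
      field_simp
      rw [← hfd]
      push_cast
      ring
    rw [Finset.sum_congr rfl key, ← Finset.mul_sum]
    have hrefl : ∑ t ∈ Finset.range (n + 1), (2 : ℝ) ^ (n - t) / ((n - t).factorial)
        = ∑ k ∈ Finset.range (n + 1), (2 : ℝ) ^ k / (k.factorial) := by
      rw [← Finset.sum_range_reflect (fun k => (2 : ℝ) ^ k / (k.factorial)) (n + 1)]
      exact Finset.sum_congr rfl fun j hj => by
        rw [Nat.add_sub_cancel]
    rw [hrefl, mul_comm (Real.exp 2) _]
    refine mul_le_mul_of_nonneg_left ?_ (by positivity)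
    exact Real.sum_le_exp_of_nonneg (by norm_num) (n + 1)
end
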